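/- arXiv:2304.02590 — 7 statements merged into one kernel-verified Lean document; each statement's English description precedes it below -/
import Mathlib

section
/- Let A and B be stable matching instances on the same n workers and n firms such that every worker has the same preference order in A as in B (i.e., A and B are (0,n)). Then for any two matchings M₁, M₂ that are stable under both A and B: the join M₁ ∨_A M₂ and the meet M₁ ∧_A M₂ are bijections, they satisfy M₁ ∨_A M₂ = M₁ ∨_B M₂ and M₁ ∧_A M₂ = M₁ ∧_B M₂, and both are stable under both A and B. In particular, M_A ∩ M_B is a sublattice of the lattice of A-stable matchings and of the lattice of B-stable matchings. -/
/-- A stable matching instance on `n` workers and `n` firms: each worker `w` has a strict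
total preference order over firms encoded by an injective rank function `wRank w`
(lower rank = more preferred), and each firm `f` has one over workers (`fRank f`). -/
structure SMInstance (n : ℕ) where
  wRank : Fin n → Fin n → Fin n
  fRank : Fin n → Fin n → Fin n
  wRank_inj : ∀ w, Function.Injective (wRank w)
  fRank_inj : ∀ f, Function.Injective (fRank f)

/-- `(w, f)` is a blocking pair of the matching `M` under instance `I`:
`M w ≠ f`, `w` strictly prefers `f` to `M w`, and `f` strictly prefers `w`
to its `M`-partner (the worker `w'` with `M w' = f`). -/
def Blocking {n : ℕ} (I : SMInstance n) (M : Fin n → Fin n) (w f : Fin n) : Prop :=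
  M w ≠ f ∧ I.wRank w f < I.wRank w (M w) ∧
    ∃ w', M w' = f ∧ I.fRank f w < I.fRank f w'

/-- A matching (bijection) is stable under `I` if it has no blocking pair. -/
def IsStable {n : ℕ} (I : SMInstance n) (M : Fin n → Fin n) : Prop :=
  Function.Bijective M ∧ ∀ w f, ¬ Blocking I M w f

/-- The join `M₁ ∨_I M₂`: each worker gets its less preferred partner. -/
def joinMap {n : ℕ} (I : SMInstance n) (M₁ M₂ : Fin n → Fin n) : Fin n → Fin n :=
  fun w => if I.wRank w (M₁ w) < I.wRank w (M₂ w) then M₂ w else M₁ w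

/-- The meet `M₁ ∧_I M₂`: each worker gets its more preferred partner. -/
def meetMap {n : ℕ} (I : SMInstance n) (M₁ M₂ : Fin n → Fin n) : Fin n → Fin n :=
  fun w => if I.wRank w (M₁ w) < I.wRank w (M₂ w) then M₁ w else M₂ w

section Aux

variable {n : ℕ}

lemma decomp (I : SMInstance n) (M₁ M₂ : Fin n → Fin n) (w : Fin n) :
    (meetMap I M₁ M₂ w = M₁ w ∧ joinMap I M₁ M₂ w = M₂ w) ∨
    (meetMap I M₁ M₂ w = M₂ w ∧ joinMap I M₁ M₂ w = M₁ w) := by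
  unfold meetMap joinMap
  split <;> simp

lemma rank_meet_le₁ (I : SMInstance n) (M₁ M₂ : Fin n → Fin n) (w : Fin n) :
    I.wRank w (meetMap I M₁ M₂ w) ≤ I.wRank w (M₁ w) := by
  unfold meetMap
  split
  · exact le_refl _
  · exact le_of_not_gt ‹_›

lemma rank_meet_le₂ (I : SMInstance n) (M₁ M₂ : Fin n → Fin n) (w : Fin n) :
    I.wRank w (meetMap I M₁ M₂ w) ≤ I.wRank w (M₂ w) := by
  unfold meetMap
  split
  · exact le_of_lt ‹_›
  · exact le_refl _

lemma rank_le_join₁ (I : SMInstance n) (M₁ M₂ : Fin n → Fin n) (w : Fin n) :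
    I.wRank w (M₁ w) ≤ I.wRank w (joinMap I M₁ M₂ w) := by
  unfold joinMap
  split
  · exact le_of_lt ‹_›
  · exact le_refl _

lemma rank_le_join₂ (I : SMInstance n) (M₁ M₂ : Fin n → Fin n) (w : Fin n) :
    I.wRank w (M₂ w) ≤ I.wRank w (joinMap I M₁ M₂ w) := by
  unfold joinMap
  split
  · exact le_refl _
  · exact le_of_not_gt ‹_›

lemma rank_lt_of_le_ne (I : SMInstance n) (w : Fin n) {a b : Fin n}
    (hle : I.wRank w a ≤ I.wRank w b) (hne : a ≠ b) :
    I.wRank w a < I.wRank w b :=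
  lt_of_le_of_ne hle (fun h => hne (I.wRank_inj w h))

lemma no_cross (I : SMInstance n) {M₁ M₂ : Fin n → Fin n}
    (h₁ : IsStable I M₁) (h₂ : IsStable I M₂) {w w' f : Fin n}
    (hne : w ≠ w') (e1 : M₁ w = f) (e2 : M₂ w' = f)
    (p1 : I.wRank w f < I.wRank w (M₂ w))
    (p2 : I.wRank w' f < I.wRank w' (M₁ w')) : False := by
  have hff : I.fRank f w ≠ I.fRank f w' := fun h => hne (I.fRank_inj f h)
  rcases hff.lt_or_gt with h | h
  · exact h₂.2 w f ⟨fun hh => absurd p1 (by rw [hh]; exact lt_irrefl _), p1, w', e2, h⟩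
  · exact h₁.2 w' f ⟨fun hh => absurd p2 (by rw [hh]; exact lt_irrefl _), p2, w, e1, h⟩

lemma meet_inj (I : SMInstance n) {M₁ M₂ : Fin n → Fin n}
    (h₁ : IsStable I M₁) (h₂ : IsStable I M₂) :
    Function.Injective (meetMap I M₁ M₂) := by
  intro w w' he
  by_contra hne
  rcases decomp I M₁ M₂ w with ⟨a1, _⟩ | ⟨a1, _⟩ <;>
    rcases decomp I M₁ M₂ w' with ⟨a2, _⟩ | ⟨a2, _⟩
  · exact hne (h₁.1.1 (a1 ▸ a2 ▸ he))
  · -- meet w = M₁ w, meet w' = M₂ w'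
    have e1 : M₁ w = M₂ w' := a1 ▸ a2 ▸ he
    have hne2 : M₂ w' ≠ M₂ w := fun h => hne (h₂.1.1 h.symm)
    have hne1 : M₂ w' ≠ M₁ w' := fun h => hne (h₁.1.1 (e1.trans h))
    refine no_cross I h₁ h₂ hne e1 rfl ?_ ?_
    · refine rank_lt_of_le_ne I w ?_ hne2
      rw [← a2, ← he]
      exact rank_meet_le₂ I M₁ M₂ w
    · refine rank_lt_of_le_ne I w' ?_ hne1
      rw [← a2]
      exact rank_meet_le₁ I M₁ M₂ w'
  · -- meet w = M₂ w, meet w' = M₁ w'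
    have e1 : M₂ w = M₁ w' := a1 ▸ a2 ▸ he
    have hne2 : M₁ w' ≠ M₁ w := fun h => hne (h₁.1.1 h.symm)
    have hne1 : M₁ w' ≠ M₂ w' := fun h => hne (h₂.1.1 (e1.trans h))
    refine no_cross I h₂ h₁ hne e1 rfl ?_ ?_
    · refine rank_lt_of_le_ne I w ?_ hne2
      rw [← a2, ← he]
      exact rank_meet_le₁ I M₁ M₂ w
    · refine rank_lt_of_le_ne I w' ?_ hne1
      rw [← a2]
      exact rank_meet_le₂ I M₁ M₂ w'
  · exact hne (h₂.1.1 (a1 ▸ a2 ▸ he))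

lemma meet_bij (I : SMInstance n) {M₁ M₂ : Fin n → Fin n}
    (h₁ : IsStable I M₁) (h₂ : IsStable I M₂) :
    Function.Bijective (meetMap I M₁ M₂) :=
  Finite.injective_iff_bijective.mp (meet_inj I h₁ h₂)

lemma join_cross {M₁ M₂ L : Fin n → Fin n}
    (hM₁ : Function.Injective M₁) (hM₂ : Function.Injective M₂)
    (hLs : Function.Surjective L) {w w' f : Fin n}
    (hne : w ≠ w') (e1 : M₂ w = f) (e2 : M₁ w' = f)
    (l1 : L w = M₁ w) (l2 : L w' = M₂ w')
    (hL : ∀ u, L u = M₁ u ∨ L u = M₂ u) : False := by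
  obtain ⟨w₀, h0⟩ := hLs f
  rcases hL w₀ with h | h
  · have hw0 : w₀ = w' := hM₁ (h.symm.trans (h0.trans e2.symm))
    subst hw0
    exact hne (hM₂ (e1.trans (l2.symm.trans h0).symm))
  · have hw0 : w₀ = w := hM₂ (h.symm.trans (h0.trans e1.symm))
    subst hw0
    exact hne (hM₁ ((l1.symm.trans h0).trans e2.symm))

lemma join_inj (I : SMInstance n) {M₁ M₂ : Fin n → Fin n}
    (h₁ : IsStable I M₁) (h₂ : IsStable I M₂) :
    Function.Injective (joinMap I M₁ M₂) := by
  have hLs : Function.Surjective (meetMap I M₁ M₂) := (meet_bij I h₁ h₂).2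
  have hL : ∀ u, meetMap I M₁ M₂ u = M₁ u ∨ meetMap I M₁ M₂ u = M₂ u :=
    fun u => (decomp I M₁ M₂ u).imp (fun h => h.1) (fun h => h.1)
  intro w w' he
  by_contra hne
  rcases decomp I M₁ M₂ w with ⟨a1, b1⟩ | ⟨a1, b1⟩ <;>
    rcases decomp I M₁ M₂ w' with ⟨a2, b2⟩ | ⟨a2, b2⟩
  · -- join w = M₂ w, join w' = M₂ w'
    exact hne (h₂.1.1 (b1 ▸ b2 ▸ he))
  · -- join w = M₂ w = f, join w' = M₁ w' = f; meet w = M₁ w, meet w' = M₂ w'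
    exact join_cross h₁.1.1 h₂.1.1 hLs hne (b1 ▸ b2 ▸ he) rfl a1 a2 hL
  · -- join w = M₁ w = f, join w' = M₂ w' = f; meet w = M₂ w, meet w' = M₁ w'
    exact join_cross h₂.1.1 h₁.1.1 hLs hne (b1 ▸ b2 ▸ he) rfl a1 a2
      (fun u => ((decomp I M₁ M₂ u).imp (fun h => h.1) (fun h => h.1)).symm)
  · exact hne (h₁.1.1 (b1 ▸ b2 ▸ he))

lemma join_bij (I : SMInstance n) {M₁ M₂ : Fin n → Fin n}
    (h₁ : IsStable I M₁) (h₂ : IsStable I M₂) :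
    Function.Bijective (joinMap I M₁ M₂) :=
  Finite.injective_iff_bijective.mp (join_inj I h₁ h₂)

lemma firm_core (I : SMInstance n) {M : Fin n → Fin n}
    (h : IsStable I M) {w₁ w₂ f : Fin n}
    (e2 : M w₂ = f) (hle : I.wRank w₁ f ≤ I.wRank w₁ (M w₁))
    (hMne : M w₁ ≠ f) :
    I.fRank f w₂ ≤ I.fRank f w₁ := by
  refine le_of_not_gt fun hlt => h.2 w₁ f ⟨hMne, ?_, w₂, e2, hlt⟩
  exact lt_of_le_of_ne hle (fun hh => hMne (I.wRank_inj w₁ hh.symm))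

lemma firm_side (I : SMInstance n) {M₁ M₂ : Fin n → Fin n}
    (h₁ : IsStable I M₁) (h₂ : IsStable I M₂) {w₁ w₂ f : Fin n}
    (l : meetMap I M₁ M₂ w₁ = f) (m : joinMap I M₁ M₂ w₂ = f) :
    I.fRank f w₂ ≤ I.fRank f w₁ := by
  rcases eq_or_ne w₁ w₂ with rfl | hne
  · exact le_refl _
  rcases decomp I M₁ M₂ w₁ with ⟨a1, b1⟩ | ⟨a1, b1⟩
  · -- meet w₁ = M₁ w₁ = f, join w₁ = M₂ w₁
    rcases decomp I M₁ M₂ w₂ with ⟨a2, b2⟩ | ⟨a2, b2⟩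
    · -- join w₂ = M₂ w₂ = f
      have e2 : M₂ w₂ = f := b2 ▸ m
      have hMne : M₂ w₁ ≠ f := fun hh => hne (h₂.1.1 (hh.trans e2.symm))
      exact firm_core I h₂ e2 (by rw [← l]; exact rank_meet_le₂ I M₁ M₂ w₁) hMne
    · -- join w₂ = M₁ w₂ = f = M₁ w₁, contradiction
      exact absurd (h₁.1.1 ((b2 ▸ m).trans (a1 ▸ l).symm)) (Ne.symm hne)
  · -- meet w₁ = M₂ w₁ = f, join w₁ = M₁ w₁
    rcases decomp I M₁ M₂ w₂ with ⟨a2, b2⟩ | ⟨a2, b2⟩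
    · -- join w₂ = M₂ w₂ = f = M₂ w₁, contradiction
      exact absurd (h₂.1.1 ((b2 ▸ m).trans (a1 ▸ l).symm)) (Ne.symm hne)
    · -- join w₂ = M₁ w₂ = f
      have e2 : M₁ w₂ = f := b2 ▸ m
      have hMne : M₁ w₁ ≠ f := fun hh => hne (h₁.1.1 (hh.trans e2.symm))
      exact firm_core I h₁ e2 (by rw [← l]; exact rank_meet_le₁ I M₁ M₂ w₁) hMne

lemma meet_stable (I : SMInstance n) {M₁ M₂ : Fin n → Fin n}
    (h₁ : IsStable I M₁) (h₂ : IsStable I M₂) :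
    IsStable I (meetMap I M₁ M₂) := by
  refine ⟨meet_bij I h₁ h₂, ?_⟩
  rintro w f ⟨hne, hlt, w', e', hf⟩
  rcases decomp I M₁ M₂ w' with ⟨a2, _⟩ | ⟨a2, _⟩
  · have hlt1 : I.wRank w f < I.wRank w (M₁ w) :=
      lt_of_lt_of_le hlt (rank_meet_le₁ I M₁ M₂ w)
    exact h₁.2 w f ⟨fun hh => absurd hlt1 (by rw [hh]; exact lt_irrefl _),
      hlt1, w', a2 ▸ e', hf⟩
  · have hlt2 : I.wRank w f < I.wRank w (M₂ w) :=
      lt_of_lt_of_le hlt (rank_meet_le₂ I M₁ M₂ w)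
    exact h₂.2 w f ⟨fun hh => absurd hlt2 (by rw [hh]; exact lt_irrefl _),
      hlt2, w', a2 ▸ e', hf⟩

lemma join_stable (I : SMInstance n) {M₁ M₂ : Fin n → Fin n}
    (h₁ : IsStable I M₁) (h₂ : IsStable I M₂) :
    IsStable I (joinMap I M₁ M₂) := by
  have hjinj := join_inj I h₁ h₂
  refine ⟨join_bij I h₁ h₂, ?_⟩
  rintro w f ⟨hne, hlt, w', e', hf⟩
  rcases decomp I M₁ M₂ w with ⟨_, b1⟩ | ⟨_, b1⟩
  · -- join w = M₂ w
    have hlt2 : I.wRank w f < I.wRank w (M₂ w) := b1 ▸ hlt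
    obtain ⟨u, hu⟩ := h₂.1.2 f
    have hfu : I.fRank f w < I.fRank f u := by
      rcases eq_or_ne u w' with rfl | hnu
      · exact hf
      · have hlam : meetMap I M₁ M₂ u = f := by
          rcases decomp I M₁ M₂ u with ⟨_, b3⟩ | ⟨a3, _⟩
          · exact absurd (hjinj ((b3.trans hu).trans e'.symm)) hnu
          · exact a3.trans hu
        exact lt_of_lt_of_le hf (firm_side I h₁ h₂ hlam e')
    exact h₂.2 w f ⟨fun hh => absurd hlt2 (by rw [hh]; exact lt_irrefl _), hlt2, u, hu, hfu⟩
  · -- join w = M₁ w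
    have hlt1 : I.wRank w f < I.wRank w (M₁ w) := b1 ▸ hlt
    obtain ⟨u, hu⟩ := h₁.1.2 f
    have hfu : I.fRank f w < I.fRank f u := by
      rcases eq_or_ne u w' with rfl | hnu
      · exact hf
      · have hlam : meetMap I M₁ M₂ u = f := by
          rcases decomp I M₁ M₂ u with ⟨a3, _⟩ | ⟨_, b3⟩
          · exact a3.trans hu
          · exact absurd (hjinj ((b3.trans hu).trans e'.symm)) hnu
        exact lt_of_lt_of_le hf (firm_side I h₁ h₂ hlam e')
    exact h₁.2 w f ⟨fun hh => absurd hlt1 (by rw [hh]; exact lt_irrefl _), hlt1, u, hu, hfu⟩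

end Aux

/-- if A and B are (0,n) (all workers have identical preferences),
then for M₁, M₂ stable under both A and B, the join and meet (taken in A) are
bijections, agree with the join and meet taken in B, and are stable under both. -/
theorem stmt0 {n : ℕ} (hn : 1 ≤ n) (A B : SMInstance n)
    (hW : A.wRank = B.wRank)
    (M₁ M₂ : Fin n → Fin n)
    (h₁ : IsStable A M₁ ∧ IsStable B M₁)
    (h₂ : IsStable A M₂ ∧ IsStable B M₂) :
    Function.Bijective (joinMap A M₁ M₂) ∧ Function.Bijective (meetMap A M₁ M₂) ∧
    joinMap A M₁ M₂ = joinMap B M₁ M₂ ∧ meetMap A M₁ M₂ = meetMap B M₁ M₂ ∧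
    (IsStable A (joinMap A M₁ M₂) ∧ IsStable B (joinMap A M₁ M₂)) ∧
    (IsStable A (meetMap A M₁ M₂) ∧ IsStable B (meetMap A M₁ M₂)) := by
  have hj : joinMap A M₁ M₂ = joinMap B M₁ M₂ := by
    unfold joinMap; rw [hW]
  have hm : meetMap A M₁ M₂ = meetMap B M₁ M₂ := by
    unfold meetMap; rw [hW]
  refine ⟨join_bij A h₁.1 h₂.1, meet_bij A h₁.1 h₂.1, hj, hm,
    ⟨join_stable A h₁.1 h₂.1, ?_⟩, meet_stable A h₁.1 h₂.1, ?_⟩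
  · rw [hj]; exact join_stable B h₁.2 h₂.2
  · rw [hm]; exact meet_stable B h₁.2 h₂.2
end

section
/- Let A and B be stable matching instances on the same n workers and n firms such that every worker has the same preference order in A as in B. If the set M_A ∩ M_B of matchings stable under both A and B is nonempty, then it contains a firm-optimal matching M⊥: a matching M⊥ ∈ M_A ∩ M_B such that for every M ∈ M_A ∩ M_B and every firm f, f weakly prefers M⊥⁻¹(f) to M⁻¹(f) under its preference order in A and also under its preference order in B. -/
namespace SMHelp

variable {n : ℕ}

lemma cases' (I : SMInstance n) (M₁ M₂ : Fin n → Fin n) (w : Fin n) :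
    (joinMap I M₁ M₂ w = M₁ w ∧ meetMap I M₁ M₂ w = M₂ w ∧
       I.wRank w (M₂ w) ≤ I.wRank w (M₁ w)) ∨
    (joinMap I M₁ M₂ w = M₂ w ∧ meetMap I M₁ M₂ w = M₁ w ∧
       I.wRank w (M₁ w) < I.wRank w (M₂ w)) := by
  unfold joinMap meetMap
  by_cases h : I.wRank w (M₁ w) < I.wRank w (M₂ w)
  · exact Or.inr ⟨if_pos h, if_pos h, h⟩
  · exact Or.inl ⟨if_neg h, if_neg h, le_of_not_gt h⟩

lemma le_join₁ (I : SMInstance n) (M₁ M₂ : Fin n → Fin n) (w : Fin n) :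
    I.wRank w (M₁ w) ≤ I.wRank w (joinMap I M₁ M₂ w) := by
  rcases cases' I M₁ M₂ w with ⟨hj, _, _⟩ | ⟨hj, _, hlt⟩
  · rw [hj]
  · rw [hj]; exact le_of_lt hlt

lemma le_join₂ (I : SMInstance n) (M₁ M₂ : Fin n → Fin n) (w : Fin n) :
    I.wRank w (M₂ w) ≤ I.wRank w (joinMap I M₁ M₂ w) := by
  rcases cases' I M₁ M₂ w with ⟨hj, _, hle⟩ | ⟨hj, _, _⟩
  · rw [hj]; exact hle
  · rw [hj]

/-- The generic contradiction: if `f = M₁ b = M₂ a` with `a ≠ b`,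
`a` strictly prefers `f` to `M₁ a` and `b` strictly prefers `f` to `M₂ b`,
then one of the two pairs blocks one of the two stable matchings. -/
lemma block_one (I : SMInstance n) {M₁ M₂ : Fin n → Fin n}
    (h₁ : IsStable I M₁) (h₂ : IsStable I M₂) {a b f : Fin n}
    (hab : a ≠ b) (h1 : M₁ b = f) (h2 : M₂ a = f)
    (p1 : I.wRank a f < I.wRank a (M₁ a))
    (p2 : I.wRank b f < I.wRank b (M₂ b)) : False := by
  rcases lt_trichotomy (I.fRank f a) (I.fRank f b) with h | h | h
  · exact h₁.2 a f ⟨fun e => absurd p1 (by rw [e]; exact lt_irrefl _), p1, b, h1, h⟩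
  · exact hab (I.fRank_inj f h)
  · exact h₂.2 b f ⟨fun e => absurd p2 (by rw [e]; exact lt_irrefl _), p2, a, h2, h⟩

lemma meet_inj (I : SMInstance n) {M₁ M₂ : Fin n → Fin n}
    (h₁ : IsStable I M₁) (h₂ : IsStable I M₂) :
    Function.Injective (meetMap I M₁ M₂) := by
  intro a b hab
  by_contra hne
  rcases cases' I M₁ M₂ a with ⟨_, ha, hra⟩ | ⟨_, ha, hra⟩ <;>
    rcases cases' I M₁ M₂ b with ⟨_, hb, hrb⟩ | ⟨_, hb, hrb⟩
  · -- μ a = M₂ a, μ b = M₂ b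
    exact hne (h₂.1.1 (by rw [← ha, ← hb, hab]))
  · -- μ a = M₂ a (weak side), μ b = M₁ b (strict side); f := M₂ a = M₁ b
    have hf : M₂ a = M₁ b := by rw [← ha, ← hb, hab]
    have hM₁a : M₁ a ≠ M₂ a := by
      intro e
      exact hne (h₁.1.1 (e.trans hf))
    refine block_one I h₁ h₂ hne hf.symm rfl ?_ ?_
    · exact lt_of_le_of_ne hra (fun e => hM₁a ((I.wRank_inj a e).symm))
    · rw [hf]; exact hrb
  · -- μ a = M₁ a (strict side), μ b = M₂ b (weak side); f := M₁ a = M₂ b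
    have hf : M₁ a = M₂ b := by rw [← ha, ← hb, hab]
    have hM₂b : M₂ b ≠ M₁ b := by
      intro e
      exact hne (h₁.1.1 ((hf.trans e)))
    refine block_one I h₂ h₁ (M₁ := M₂) (M₂ := M₁) hne hf.symm rfl ?_ ?_
    · exact hra
    · rw [hf]; exact lt_of_le_of_ne hrb (fun e => hM₂b (I.wRank_inj b e))
  · -- μ a = M₁ a, μ b = M₁ b
    exact hne (h₁.1.1 (by rw [← ha, ← hb, hab]))

lemma meet_bij (I : SMInstance n) {M₁ M₂ : Fin n → Fin n}
    (h₁ : IsStable I M₁) (h₂ : IsStable I M₂) :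
    Function.Bijective (meetMap I M₁ M₂) :=
  (Finite.injective_iff_bijective).1 (meet_inj I h₁ h₂)

lemma join_inj (I : SMInstance n) {M₁ M₂ : Fin n → Fin n}
    (h₁ : IsStable I M₁) (h₂ : IsStable I M₂) :
    Function.Injective (joinMap I M₁ M₂) := by
  intro a b hab
  by_contra hne
  -- handle the two mixed cases symmetrically via an auxiliary claim
  have aux : ∀ a b : Fin n, a ≠ b →
      joinMap I M₁ M₂ a = joinMap I M₁ M₂ b →
      joinMap I M₁ M₂ a = M₁ a → I.wRank a (M₂ a) ≤ I.wRank a (M₁ a) →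
      joinMap I M₁ M₂ b = M₂ b → I.wRank b (M₁ b) < I.wRank b (M₂ b) → False := by
    intro a b hne hab ha hra hb hrb
    -- f := M₁ a = M₂ b
    have hf : M₁ a = M₂ b := by rw [← ha, ← hb, hab]
    have hμa : meetMap I M₁ M₂ a = M₂ a := by
      rcases cases' I M₁ M₂ a with ⟨_, h, _⟩ | ⟨hj, _, hlt⟩
      · exact h
      · have e : M₁ a = M₂ a := ha.symm.trans hj
        rw [e] at hlt
        exact absurd hlt (lt_irrefl _)
    have hμb : meetMap I M₁ M₂ b = M₁ b := by
      rcases cases' I M₁ M₂ b with ⟨hj, _, _⟩ | ⟨_, h, _⟩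
      · have e : M₁ b = M₂ b := hj.symm.trans hb
        rw [e] at hrb
        exact absurd hrb (lt_irrefl _)
      · exact h
    have hM₂a : M₂ a ≠ M₂ b := fun e => hne (h₂.1.1 e)
    have hM₁b : M₁ b ≠ M₁ a := fun e => hne (h₁.1.1 e.symm)
    obtain ⟨c, hc⟩ := (meet_bij I h₁ h₂).2 (M₁ a)
    rcases cases' I M₁ M₂ c with ⟨_, hμc, _⟩ | ⟨_, hμc, _⟩
    · -- meet c = M₂ c = M₁ a = M₂ b ⇒ c = b, but meet b = M₁ b ≠ M₁ a
      have : c = b := h₂.1.1 ((hμc.symm.trans hc).trans hf)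
      rw [this, hμb] at hc
      exact hM₁b hc
    · -- meet c = M₁ c = M₁ a ⇒ c = a, but meet a = M₂ a ≠ M₂ b = M₁ a
      have : c = a := h₁.1.1 (hμc.symm.trans hc)
      rw [this, hμa] at hc
      exact hM₂a (hc.trans hf)
  rcases cases' I M₁ M₂ a with ⟨ha, _, hra⟩ | ⟨ha, _, hra⟩ <;>
    rcases cases' I M₁ M₂ b with ⟨hb, _, hrb⟩ | ⟨hb, _, hrb⟩
  · exact hne (h₁.1.1 (by rw [← ha, ← hb, hab]))
  · exact aux a b hne hab ha hra hb hrb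
  · exact aux b a (Ne.symm hne) hab.symm hb hrb ha hra
  · exact hne (h₂.1.1 (by rw [← ha, ← hb, hab]))

/-- In the join, each firm weakly prefers its join-partner to its `M₁`-partner. -/
lemma join_firm₁ (I : SMInstance n) {M₁ M₂ : Fin n → Fin n}
    (h₁ : IsStable I M₁) (h₂ : IsStable I M₂) {w' w'' : Fin n}
    (hj : joinMap I M₁ M₂ w' = M₁ w'') :
    I.fRank (M₁ w'') w' ≤ I.fRank (M₁ w'') w'' := by
  rcases cases' I M₁ M₂ w' with ⟨hj', _, _⟩ | ⟨hj', _, hlt⟩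
  · rw [h₁.1.1 (hj'.symm.trans hj)]
  · have hM₂ : M₂ w' = M₁ w'' := hj'.symm.trans hj
    have hlt' : I.wRank w' (M₁ w') < I.wRank w' (M₁ w'') := by rw [← hM₂]; exact hlt
    have hww : w' ≠ w'' := fun e => absurd hlt' (by rw [← e]; exact lt_irrefl _)
    have hM₂w'' : M₂ w'' ≠ M₁ w'' := fun e => hww (h₂.1.1 (hM₂.trans e.symm))
    have hjne : joinMap I M₁ M₂ w'' ≠ M₁ w'' := fun e =>
      hww (join_inj I h₁ h₂ (hj.trans e.symm))
    rcases cases' I M₁ M₂ w'' with ⟨hj'', _, _⟩ | ⟨hj'', _, hlt''⟩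
    · exact absurd hj'' hjne
    · by_contra hcon
      push_neg at hcon
      exact h₂.2 w'' (M₁ w'') ⟨hM₂w'', hlt'', w', hM₂, hcon⟩

/-- In the join, each firm weakly prefers its join-partner to its `M₂`-partner. -/
lemma join_firm₂ (I : SMInstance n) {M₁ M₂ : Fin n → Fin n}
    (h₁ : IsStable I M₁) (h₂ : IsStable I M₂) {w' w'' : Fin n}
    (hj : joinMap I M₁ M₂ w' = M₂ w'') :
    I.fRank (M₂ w'') w' ≤ I.fRank (M₂ w'') w'' := by
  rcases cases' I M₁ M₂ w' with ⟨hj', _, hle⟩ | ⟨hj', _, _⟩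
  · have hM₁ : M₁ w' = M₂ w'' := hj'.symm.trans hj
    by_cases hww : w' = w''
    · rw [hww]
    · have hjne : joinMap I M₁ M₂ w'' ≠ M₂ w'' := fun e =>
        hww (join_inj I h₁ h₂ (hj.trans e.symm))
      rcases cases' I M₁ M₂ w'' with ⟨hj'', _, hle''⟩ | ⟨hj'', _, _⟩
      · have hM₁w'' : M₁ w'' ≠ M₂ w'' := fun e => hww (h₁.1.1 (hM₁.trans e.symm))
        have hlt'' : I.wRank w'' (M₂ w'') < I.wRank w'' (M₁ w'') :=
          lt_of_le_of_ne hle'' (fun e => hM₁w'' (I.wRank_inj w'' e).symm)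
        by_contra hcon
        push_neg at hcon
        exact h₁.2 w'' (M₂ w'') ⟨hM₁w'', hlt'', w', hM₁, hcon⟩
      · exact absurd hj'' hjne
  · rw [h₂.1.1 (hj'.symm.trans hj)]

/-- The join of two stable matchings is stable. -/
lemma join_stable (I : SMInstance n) {M₁ M₂ : Fin n → Fin n}
    (h₁ : IsStable I M₁) (h₂ : IsStable I M₂) :
    IsStable I (joinMap I M₁ M₂) := by
  refine ⟨(Finite.injective_iff_bijective).1 (join_inj I h₁ h₂), ?_⟩
  rintro w f ⟨hne, hlt, w', hw', hs⟩
  by_cases hc : I.wRank w f < I.wRank w (M₁ w)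
  · -- (w, f) blocks M₁
    obtain ⟨w₁, hw₁⟩ := h₁.1.2 f
    have h := join_firm₁ I h₁ h₂ (w' := w') (w'' := w₁) (by rw [hw₁]; exact hw')
    rw [hw₁] at h
    exact h₁.2 w f ⟨fun e => absurd hc (by rw [e]; exact lt_irrefl _), hc, w₁, hw₁,
      lt_of_lt_of_le hs h⟩
  · -- then join w = M₂ w and (w, f) blocks M₂
    have hc₂ : I.wRank w f < I.wRank w (M₂ w) := by
      rcases cases' I M₁ M₂ w with ⟨hj, _, _⟩ | ⟨hj, _, _⟩
      · rw [hj] at hlt; exact absurd hlt hc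
      · rw [hj] at hlt; exact hlt
    obtain ⟨w₂, hw₂⟩ := h₂.1.2 f
    have h := join_firm₂ I h₁ h₂ (w' := w') (w'' := w₂) (by rw [hw₂]; exact hw')
    rw [hw₂] at h
    exact h₂.2 w f ⟨fun e => absurd hc₂ (by rw [e]; exact lt_irrefl _), hc₂, w₂, hw₂,
      lt_of_lt_of_le hs h⟩

end SMHelp

/-- if A and B have identical worker preferences and some matching is
stable under both, then there is a firm-optimal matching stable under both:
every firm weakly prefers its partner there to its partner in any other matching
stable under both, under its preference orders in both A and B. -/
theorem stmt3 {n : ℕ} (hn : 1 ≤ n) (A B : SMInstance n)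
    (hW : A.wRank = B.wRank)
    (hne : ∃ M, IsStable A M ∧ IsStable B M) :
    ∃ Mbot, (IsStable A Mbot ∧ IsStable B Mbot) ∧
      ∀ M, (IsStable A M ∧ IsStable B M) →
        ∀ f w w', Mbot w = f → M w' = f →
          A.fRank f w ≤ A.fRank f w' ∧ B.fRank f w ≤ B.fRank f w' := by
  classical
  obtain ⟨M₀, hM₀⟩ := hne
  -- the join maps of A and B agree, since they only use worker preferences
  have hjAB : ∀ M M' : Fin n → Fin n, joinMap A M M' = joinMap B M M' := by
    intro M M'
    funext w
    simp only [joinMap, hW]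
  -- the set of doubly stable matchings is closed under join
  have hjoin : ∀ M M' : Fin n → Fin n, (IsStable A M ∧ IsStable B M) →
      (IsStable A M' ∧ IsStable B M') →
      IsStable A (joinMap A M M') ∧ IsStable B (joinMap A M M') := by
    intro M M' hM hM'
    constructor
    · exact SMHelp.join_stable A hM.1 hM'.1
    · rw [hjAB]
      exact SMHelp.join_stable B hM.2 hM'.2
  -- build a worker-pessimal doubly stable matching by folding joins
  have key : ∀ s : Finset (Fin n → Fin n), ∃ Mb,
      (IsStable A Mb ∧ IsStable B Mb) ∧
      ∀ M ∈ s, (IsStable A M ∧ IsStable B M) →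
        ∀ w, A.wRank w (M w) ≤ A.wRank w (Mb w) := by
    intro s
    induction s using Finset.induction with
    | empty => exact ⟨M₀, hM₀, by simp⟩
    | @insert M s hMs ih =>
        obtain ⟨Mb, hMb, hle⟩ := ih
        by_cases hM : IsStable A M ∧ IsStable B M
        · refine ⟨joinMap A M Mb, hjoin M Mb hM hMb, ?_⟩
          intro M' hM' hst w
          rcases Finset.mem_insert.1 hM' with rfl | h
          · exact SMHelp.le_join₁ A M' Mb w
          · exact (hle M' h hst w).trans (SMHelp.le_join₂ A M Mb w)
        · refine ⟨Mb, hMb, ?_⟩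
          intro M' hM' hst w
          rcases Finset.mem_insert.1 hM' with rfl | h
          · exact absurd hst hM
          · exact hle M' h hst w
  obtain ⟨Mb, hMb, hle⟩ := key Finset.univ
  refine ⟨Mb, hMb, ?_⟩
  intro M hM f w w' hbw hmw'
  by_cases hww : w = w'
  · subst hww
    exact ⟨le_refl _, le_refl _⟩
  -- worker pessimality: every worker weakly prefers M to Mb
  have hpess : A.wRank w' (M w') ≤ A.wRank w' (Mb w') :=
    hle M (Finset.mem_univ M) hM w'
  have hMbne : Mb w' ≠ f := by
    intro e
    exact hww (hMb.1.1.1 (hbw.trans e.symm))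
  have hstrict : A.wRank w' f < A.wRank w' (Mb w') := by
    rw [← hmw']
    exact lt_of_le_of_ne hpess (by
      rw [hmw']
      exact fun e => hMbne ((A.wRank_inj w' e).symm))
  constructor
  · by_contra hcon
    push_neg at hcon
    exact hMb.1.2 w' f ⟨hMbne, hstrict, w, hbw, hcon⟩
  · by_contra hcon
    push_neg at hcon
    refine hMb.2.2 w' f ⟨hMbne, ?_, w, hbw, hcon⟩
    rw [← hW]
    exact hstrict
end

section
/- There exist stable matching instances A and B on the same 5 workers and 5 firms in which every worker has the same preference order in A as in B, together with matchings M₁, M₂, M₃, M₄ each stable under A but not stable under B, such that M₁ ∨_A M₂ is stable under both A and B and M₃ ∧_A M₄ is stable under both A and B. Hence the set M_A \ M_B need not be closed under the join of the lattice of A-stable matchings, nor under its meet (it is not a semi-sublattice of either kind). -/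

instance {n : ℕ} (I : SMInstance n) (M : Fin n → Fin n) (w f : Fin n) :
    Decidable (Blocking I M w f) := by unfold Blocking; infer_instance

instance {n : ℕ} (I : SMInstance n) (M : Fin n → Fin n) :
    Decidable (IsStable I M) := by unfold IsStable; infer_instance

def wr : Fin 5 → Fin 5 → Fin 5 :=
  ![![3, 4, 1, 2, 0], ![2, 1, 4, 3, 0], ![4, 2, 3, 0, 1], ![0, 1, 3, 4, 2], ![4, 2, 3, 1, 0]]

def instA : SMInstance 5 where
  wRank := wr
  fRank := ![![3, 4, 0, 2, 1], ![0, 2, 4, 3, 1], ![2, 3, 4, 0, 1], ![3, 1, 4, 0, 2], ![0, 1, 4, 2, 3]]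
  wRank_inj := by decide
  fRank_inj := by decide

def instB : SMInstance 5 where
  wRank := wr
  fRank := ![![4, 1, 0, 2, 3], ![0, 3, 4, 2, 1], ![3, 0, 2, 1, 4], ![2, 0, 3, 4, 1], ![0, 4, 3, 2, 1]]
  wRank_inj := by decide
  fRank_inj := by decide

def mA : Fin 5 → Fin 5 := ![4, 1, 0, 2, 3]
def mB : Fin 5 → Fin 5 := ![4, 3, 2, 0, 1]

/-- there are (0,n) instances A, B on 5 workers and 5 firms and matchings
M₁, M₂, M₃, M₄ stable under A but not B whose A-join (resp. A-meet) is stable under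
both A and B; so the difference set need not be a join or meet semi-sublattice. -/
theorem stmt4 :
    ∃ (A B : SMInstance 5), A.wRank = B.wRank ∧
      ∃ M₁ M₂ M₃ M₄ : Fin 5 → Fin 5,
        (IsStable A M₁ ∧ ¬ IsStable B M₁) ∧
        (IsStable A M₂ ∧ ¬ IsStable B M₂) ∧
        (IsStable A M₃ ∧ ¬ IsStable B M₃) ∧
        (IsStable A M₄ ∧ ¬ IsStable B M₄) ∧
        (IsStable A (joinMap A M₁ M₂) ∧ IsStable B (joinMap A M₁ M₂)) ∧
        (IsStable A (meetMap A M₃ M₄) ∧ IsStable B (meetMap A M₃ M₄)) := by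
  refine ⟨instA, instB, rfl, mA, mB, mA, mB, ?_, ?_, ?_, ?_, ?_, ?_⟩ <;>
    exact ⟨by decide, by decide⟩
end

section
/- Let Y be an instance on n workers and n firms in which every worker w has a strict total (linear) preference order over the firms and every firm f has a strict partial order >_f over the workers. If M₁ and M₂ are both strongly stable under Y, then the map sending each worker w to the less preferred of M₁(w), M₂(w) and the map sending each worker w to the more preferred of M₁(w), M₂(w) are both bijections and are both strongly stable under Y. Hence the strongly stable matchings of Y form a lattice under these operations. -/
/-- An instance with linear worker preferences (injective rank functions) and a
strict partial order fPref f over workers for each firm f. -/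
structure PartialInstance (n : ℕ) where
  wRank : Fin n → Fin n → Fin n
  wRank_inj : ∀ w, Function.Injective (wRank w)
  fPref : Fin n → Fin n → Fin n → Prop
  fPref_irrefl : ∀ f w, ¬ fPref f w w
  fPref_trans : ∀ f a b c, fPref f a b → fPref f b c → fPref f a c

/-- Strong blocking pair: w strictly prefers f to M w, and f does not strictly
prefer its M-partner to w (it prefers w or is incomparable). -/
def StronglyBlocking {n : ℕ} (Y : PartialInstance n) (M : Fin n → Fin n) (w f : Fin n) : Prop :=
  M w ≠ f ∧ Y.wRank w f < Y.wRank w (M w) ∧ ∃ w', M w' = f ∧ ¬ Y.fPref f w' w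

/-- A matching is strongly stable if it is a bijection with no strong blocking pair. -/
def StronglyStable {n : ℕ} (Y : PartialInstance n) (M : Fin n → Fin n) : Prop :=
  Function.Bijective M ∧ ∀ w f, ¬ StronglyBlocking Y M w f

/-- Join: each worker gets its less preferred partner. -/
def pJoin {n : ℕ} (Y : PartialInstance n) (M₁ M₂ : Fin n → Fin n) : Fin n → Fin n :=
  fun w => if Y.wRank w (M₁ w) < Y.wRank w (M₂ w) then M₂ w else M₁ w

/-- Meet: each worker gets its more preferred partner. -/
def pMeet {n : ℕ} (Y : PartialInstance n) (M₁ M₂ : Fin n → Fin n) : Fin n → Fin n :=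
  fun w => if Y.wRank w (M₁ w) < Y.wRank w (M₂ w) then M₁ w else M₂ w

section Stmt7Aux

variable {n : ℕ} {Y : PartialInstance n}

private lemma stmt7_noblock {M : Fin n → Fin n} (hM : StronglyStable Y M) {w f w' : Fin n}
    (h1 : M w ≠ f) (h2 : Y.wRank w f < Y.wRank w (M w)) (h3 : M w' = f) :
    Y.fPref f w' w := by
  by_contra h
  exact hM.2 w f ⟨h1, h2, w', h3, h⟩

private lemma stmt7_rank_lt {w a b : Fin n} (hne : a ≠ b)
    (h : ¬ Y.wRank w a < Y.wRank w b) : Y.wRank w b < Y.wRank w a :=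
  lt_of_le_of_ne (not_lt.1 h) (fun hr => hne ((Y.wRank_inj w hr).symm))

/-- Forward propagation: if `x` strictly prefers `A x` to `B x`, then the `B`-partner of
the firm `A x` also strictly prefers its `A`-partner to its `B`-partner. -/
private lemma stmt7_pmem {A B : Fin n → Fin n} (hA : StronglyStable Y A)
    (hB : StronglyStable Y B) {x y : Fin n}
    (hx : Y.wRank x (A x) < Y.wRank x (B x)) (hy : B y = A x) :
    Y.wRank y (A y) < Y.wRank y (B y) := by
  have hne : A x ≠ B x := fun h => (ne_of_lt hx) (by rw [h])
  have hyx : y ≠ x := by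
    rintro rfl
    exact hne hy.symm
  have hp1 : Y.fPref (A x) y x := stmt7_noblock hB (Ne.symm hne) hx hy
  have hAyx : A y ≠ A x := fun h => hyx (hA.1.1 h)
  have hABy : A y ≠ B y := by rw [hy]; exact hAyx
  by_contra hcon
  have h2' : Y.wRank y (B y) < Y.wRank y (A y) := stmt7_rank_lt hABy hcon
  have hp2 : Y.fPref (A x) x y :=
    stmt7_noblock hA hAyx (by rw [← hy]; exact h2') rfl
  exact Y.fPref_irrefl (A x) y (Y.fPref_trans _ y x y hp1 hp2)

/-- Inverse propagation, via finiteness: if the `A`-partner of the firm `B a` strictly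
prefers its `A`-partner, then so does `a`. -/
private lemma stmt7_pinv {A B : Fin n → Fin n} (hA : StronglyStable Y A)
    (hB : StronglyStable Y B) {a y : Fin n}
    (hy : B y = A a) (hPy : Y.wRank y (A y) < Y.wRank y (B y)) :
    Y.wRank a (A a) < Y.wRank a (B a) := by
  classical
  set eB := Equiv.ofBijective B hB.1 with heB
  set σ : Fin n → Fin n := fun x => eB.symm (A x) with hσ
  have hσinj : Function.Injective σ := fun u v h => hA.1.1 (eB.symm.injective h)
  set P : Finset (Fin n) :=
    Finset.univ.filter (fun x => Y.wRank x (A x) < Y.wRank x (B x)) with hP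
  have hmaps : ∀ x ∈ P, σ x ∈ P := by
    intro x hx
    simp only [hP, Finset.mem_filter, Finset.mem_univ, true_and] at hx ⊢
    exact stmt7_pmem hA hB hx (show B (eB.symm (A x)) = A x from eB.apply_symm_apply (A x))
  have himg : P.image σ = P := by
    apply Finset.eq_of_subset_of_card_le
    · intro z hz
      obtain ⟨x, hx, rfl⟩ := Finset.mem_image.1 hz
      exact hmaps x hx
    · exact le_of_eq (Finset.card_image_of_injective P hσinj).symm
  have hyP : y ∈ P := by
    simp only [hP, Finset.mem_filter, Finset.mem_univ, true_and]
    exact hPy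
  have hσa : σ a = y := by
    simp only [hσ]
    rw [Equiv.symm_apply_eq]
    exact hy.symm
  rw [← himg] at hyP
  obtain ⟨p, hp, hpy⟩ := Finset.mem_image.1 hyP
  have hpa : p = a := hσinj (hpy.trans hσa.symm)
  rw [hpa] at hp
  simpa only [hP, Finset.mem_filter, Finset.mem_univ, true_and] using hp

/-- The key step for stability of the join. -/
private lemma stmt7_jstab {A B : Fin n → Fin n} (hA : StronglyStable Y A)
    (hB : StronglyStable Y B) {w f w' : Fin n}
    (h4 : ¬ Y.fPref f w' w) (hAf : A w' = f)
    (hBw : Y.wRank w f < Y.wRank w (B w))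
    (hw' : Y.wRank w' (B w') < Y.wRank w' (A w')) : False := by
  set b := (Equiv.ofBijective B hB.1).symm f with hb
  have hBb : B b = f := Equiv.apply_symm_apply (Equiv.ofBijective B hB.1) f
  have hBwf : B w ≠ f := fun h => (ne_of_lt hBw) (by rw [h])
  have h1 : Y.fPref f b w := stmt7_noblock hB hBwf hBw hBb
  have hbP : Y.wRank b (B b) < Y.wRank b (A b) :=
    stmt7_pinv (A := B) (B := A) hB hA (by rw [hAf, hBb]) hw'
  have hAbf : A b ≠ f := by
    intro h
    have hbw' : b = w' := hA.1.1 (h.trans hAf.symm)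
    rw [hbw'] at hBb
    rw [hAf, ← hBb] at hw'
    exact lt_irrefl _ hw'
  have h2 : Y.fPref f w' b :=
    stmt7_noblock hA hAbf (by rw [← hBb]; exact hbP) hAf
  exact h4 (Y.fPref_trans f w' b w h2 h1)

/-- The key step for injectivity of the meet. -/
private lemma stmt7_mixed {A B : Fin n → Fin n} (hA : StronglyStable Y A)
    (hB : StronglyStable Y B) {w w' : Fin n} (hne : w ≠ w') (h : A w = B w')
    (hw : Y.wRank w (A w) < Y.wRank w (B w))
    (hw' : Y.wRank w' (B w') ≤ Y.wRank w' (A w')) : False := by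
  have hBwf : B w ≠ A w := fun hh => (ne_of_lt hw) (congrArg (Y.wRank w) hh.symm)
  have hp1 : Y.fPref (A w) w' w := stmt7_noblock hB hBwf hw h.symm
  have hAw' : A w' ≠ A w := fun hh => hne (hA.1.1 hh).symm
  have hne2 : A w' ≠ B w' := by rw [← h]; exact hAw'
  have hlt : Y.wRank w' (A w) < Y.wRank w' (A w') := by
    rw [h]
    exact stmt7_rank_lt hne2 (not_lt.2 hw')
  have hp2 : Y.fPref (A w) w w' := stmt7_noblock hA hAw' hlt rfl
  exact Y.fPref_irrefl (A w) w' (Y.fPref_trans _ w' w w' hp1 hp2)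

end Stmt7Aux

/-- the join and meet of two strongly stable matchings of an instance with
one-sided partial order preferences are bijections and strongly stable; hence the
strongly stable matchings form a lattice. -/
theorem stmt7 {n : ℕ} (hn : 1 ≤ n) (Y : PartialInstance n) (M₁ M₂ : Fin n → Fin n)
    (h₁ : StronglyStable Y M₁) (h₂ : StronglyStable Y M₂) :
    Function.Bijective (pJoin Y M₁ M₂) ∧ Function.Bijective (pMeet Y M₁ M₂) ∧
    StronglyStable Y (pJoin Y M₁ M₂) ∧ StronglyStable Y (pMeet Y M₁ M₂) := by
  classical
  -- Meet is injective.
  have meet_inj : Function.Injective (pMeet Y M₁ M₂) := by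
    intro u v h
    by_contra hne
    unfold pMeet at h
    split_ifs at h with c1 c2 c2
    · exact hne (h₁.1.1 h)
    · exact stmt7_mixed h₁ h₂ hne h c1 (not_lt.1 c2)
    · exact stmt7_mixed h₁ h₂ (Ne.symm hne) h.symm c2 (not_lt.1 c1)
    · exact hne (h₂.1.1 h)
  have meet_bij : Function.Bijective (pMeet Y M₁ M₂) :=
    Finite.injective_iff_bijective.1 meet_inj
  -- Join is surjective.
  have join_surj : Function.Surjective (pJoin Y M₁ M₂) := by
    intro f
    set w₁ := (Equiv.ofBijective M₁ h₁.1).symm f with hw₁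
    set w₂ := (Equiv.ofBijective M₂ h₂.1).symm f with hw₂
    have hM₁ : M₁ w₁ = f := Equiv.apply_symm_apply (Equiv.ofBijective M₁ h₁.1) f
    have hM₂ : M₂ w₂ = f := Equiv.apply_symm_apply (Equiv.ofBijective M₂ h₂.1) f
    by_contra hcon
    push_neg at hcon
    have hj1 := hcon w₁
    have hj2 := hcon w₂
    unfold pJoin at hj1 hj2
    split_ifs at hj1 hj2 with c1 c2 c2
    · -- both conditions hold: meet w₁ = M₁ w₁ = f, meet w₂ = M₁ w₂, but hj2 : M₂ w₂ ≠ f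
      exact hj2 hM₂
    · -- meet w₁ = M₁ w₁ = f, meet w₂ = M₂ w₂ = f
      have e1 : pMeet Y M₁ M₂ w₁ = f := by unfold pMeet; rw [if_pos c1]; exact hM₁
      have e2 : pMeet Y M₁ M₂ w₂ = f := by unfold pMeet; rw [if_neg c2]; exact hM₂
      have : w₁ = w₂ := meet_inj (e1.trans e2.symm)
      rw [this, hM₂] at hj1
      exact hj1 rfl
    · exact hj1 hM₁
    · exact hj1 hM₁
  have join_bij : Function.Bijective (pJoin Y M₁ M₂) :=
    Finite.surjective_iff_bijective.1 join_surj
  -- Meet is stable.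
  have meet_stable : StronglyStable Y (pMeet Y M₁ M₂) := by
    refine ⟨meet_bij, ?_⟩
    rintro w f ⟨h1, h2, w', h3, h4⟩
    have hle1 : Y.wRank w (pMeet Y M₁ M₂ w) ≤ Y.wRank w (M₁ w) := by
      unfold pMeet; split_ifs with c
      · exact le_refl _
      · exact not_lt.1 c
    have hle2 : Y.wRank w (pMeet Y M₁ M₂ w) ≤ Y.wRank w (M₂ w) := by
      unfold pMeet; split_ifs with c
      · exact le_of_lt c
      · exact le_refl _
    have hlt1 : Y.wRank w f < Y.wRank w (M₁ w) := lt_of_lt_of_le h2 hle1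
    have hlt2 : Y.wRank w f < Y.wRank w (M₂ w) := lt_of_lt_of_le h2 hle2
    have hne1 : M₁ w ≠ f := fun h => (ne_of_lt hlt1) (congrArg (Y.wRank w) h.symm)
    have hne2 : M₂ w ≠ f := fun h => (ne_of_lt hlt2) (congrArg (Y.wRank w) h.symm)
    have hcases : M₁ w' = f ∨ M₂ w' = f := by
      unfold pMeet at h3
      split_ifs at h3
      · exact Or.inl h3
      · exact Or.inr h3
    rcases hcases with hf | hf
    · exact h4 (stmt7_noblock h₁ hne1 hlt1 hf)
    · exact h4 (stmt7_noblock h₂ hne2 hlt2 hf)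
  -- Join is stable.
  have join_stable : StronglyStable Y (pJoin Y M₁ M₂) := by
    refine ⟨join_bij, ?_⟩
    rintro w f ⟨h1, h2, w', h3, h4⟩
    have hcases : M₁ w' = f ∨ M₂ w' = f := by
      unfold pJoin at h3
      split_ifs at h3
      · exact Or.inr h3
      · exact Or.inl h3
    -- First dispatch the cases where `w` prefers `f` to the corresponding partner.
    by_cases hc1 : Y.wRank w f < Y.wRank w (M₁ w)
    · by_cases hf1 : M₁ w' = f
      · exact h4 (stmt7_noblock h₁ (fun h => (ne_of_lt hc1) (congrArg (Y.wRank w) h.symm)) hc1 hf1)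
      · -- so M₂ w' = f
        have hf2 : M₂ w' = f := hcases.resolve_left hf1
        by_cases hc2 : Y.wRank w f < Y.wRank w (M₂ w)
        · exact h4 (stmt7_noblock h₂ (fun h => (ne_of_lt hc2) (congrArg (Y.wRank w) h.symm)) hc2 hf2)
        · -- w prefers M₂ w to f, so join w = M₁ w; use jstab with A = M₂, B = M₁
          have hM2wf : M₂ w ≠ f := by
            intro h
            have : w = w' := h₂.1.1 (h.trans hf2.symm)
            rw [this] at h1
            exact h1 h3
          have hlt2 : Y.wRank w (M₂ w) < Y.wRank w f :=
            stmt7_rank_lt (Ne.symm hM2wf) hc2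
          have hw'lt : Y.wRank w' (M₁ w') < Y.wRank w' (M₂ w') := by
            have h3' := h3
            unfold pJoin at h3'
            split_ifs at h3' with c'
            · exact c'
            · exact absurd h3' hf1
          exact stmt7_jstab h₂ h₁ h4 hf2 hc1 hw'lt
    · -- w prefers M₁ w to f (or M₁ w = f, excluded), so join w = M₂ w
      have hf2 : M₂ w' = f := by
        rcases hcases with hf | hf
        · exfalso
          have hM1wf : M₁ w ≠ f := by
            intro h
            have : w = w' := h₁.1.1 (h.trans hf.symm)
            rw [this] at h1
            exact h1 h3
          have hlt1 : Y.wRank w (M₁ w) < Y.wRank w f :=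
            stmt7_rank_lt (Ne.symm hM1wf) hc1
          have hc2 : Y.wRank w f < Y.wRank w (M₂ w) := by
            unfold pJoin at h2
            split_ifs at h2 with c
            · exact h2
            · exact absurd (lt_trans hlt1 h2) (lt_irrefl _)
          by_cases hf2' : M₂ w' = f
          · exact h4 (stmt7_noblock h₂ (fun h => (ne_of_lt hc2) (congrArg (Y.wRank w) h.symm)) hc2 hf2')
          · have hw'lt : Y.wRank w' (M₂ w') < Y.wRank w' (M₁ w') := by
              have h3' := h3
              unfold pJoin at h3'
              split_ifs at h3' with c'
              · exact absurd h3' hf2'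
              · exact stmt7_rank_lt (fun hh => hf2' (hh ▸ hf)) c'
            exact stmt7_jstab h₁ h₂ h4 hf hc2 hw'lt
        · exact hf
      by_cases hc2 : Y.wRank w f < Y.wRank w (M₂ w)
      · exact h4 (stmt7_noblock h₂ (fun h => (ne_of_lt hc2) (congrArg (Y.wRank w) h.symm)) hc2 hf2)
      · -- w prefers both M₁ w and M₂ w to f: contradiction with h2
        exfalso
        unfold pJoin at h2
        split_ifs at h2
        · exact hc2 h2
        · exact hc1 h2
  exact ⟨join_bij, meet_bij, join_stable, meet_stable⟩
end

section
/- There exist stable matching instances A and B on the same 5 workers and 5 firms, where B is obtained from A by changing the preference orders of exactly one worker and exactly one firm (all other agents have identical preference orders in A and B), together with matchings M₁, M₂, M₃, M₄ each stable under A but not stable under B, such that M₁ ∨_A M₂ is stable under both A and B and M₃ ∧_A M₄ is stable under both A and B. Hence even for instances that are (1,1), the set M_A \ M_B need not be a join semi-sublattice nor a meet semi-sublattice of the lattice of A-stable matchings. -/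
def Aw : Fin 5 → Fin 5 → Fin 5 :=
  ![![0,3,2,1,4], ![1,0,4,3,2], ![2,4,1,3,0], ![3,4,1,0,2], ![2,4,0,1,3]]
def Af : Fin 5 → Fin 5 → Fin 5 :=
  ![![1,2,0,4,3], ![0,3,4,2,1], ![4,2,1,0,3], ![0,4,3,1,2], ![1,0,3,4,2]]
def Bw : Fin 5 → Fin 5 → Fin 5 :=
  ![![0,4,1,3,2], ![1,0,4,3,2], ![2,4,1,3,0], ![3,4,1,0,2], ![2,4,0,1,3]]
def Bf : Fin 5 → Fin 5 → Fin 5 :=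
  ![![2,1,0,3,4], ![0,3,4,2,1], ![4,2,1,0,3], ![0,4,3,1,2], ![1,0,3,4,2]]

def myA : SMInstance 5 := ⟨Aw, Af, by decide, by decide⟩
def myB : SMInstance 5 := ⟨Bw, Bf, by decide, by decide⟩

/-- there are instances A and B on 5 workers and 5 firms, differing in the
preferences of exactly one worker and exactly one firm, and matchings M₁, M₂, M₃, M₄
stable under A but not under B, whose A-join (resp. A-meet) is stable under both A and
B; so even for (1,1) instances the difference set need not be a join semi-sublattice
nor a meet semi-sublattice of the lattice of A-stable matchings. -/
theorem stmt14 :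
    ∃ (A B : SMInstance 5) (w₁ f₁ : Fin 5),
      A.wRank w₁ ≠ B.wRank w₁ ∧ (∀ w, w ≠ w₁ → A.wRank w = B.wRank w) ∧
      A.fRank f₁ ≠ B.fRank f₁ ∧ (∀ f, f ≠ f₁ → A.fRank f = B.fRank f) ∧
      ∃ M₁ M₂ M₃ M₄ : Fin 5 → Fin 5,
        (IsStable A M₁ ∧ ¬ IsStable B M₁) ∧
        (IsStable A M₂ ∧ ¬ IsStable B M₂) ∧
        (IsStable A M₃ ∧ ¬ IsStable B M₃) ∧
        (IsStable A M₄ ∧ ¬ IsStable B M₄) ∧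
        (IsStable A (joinMap A M₁ M₂) ∧ IsStable B (joinMap A M₁ M₂)) ∧
        (IsStable A (meetMap A M₃ M₄) ∧ IsStable B (meetMap A M₃ M₄)) := by
  refine ⟨myA, myB, 0, 0, ?_, ?_, ?_, ?_,
    ![0,4,2,3,1], ![3,1,0,2,4], ![0,4,2,3,1], ![3,1,0,2,4], ?_, ?_, ?_, ?_, ?_, ?_⟩ <;>
    · show _
      decide
end

section
/- Let A and B be stable matching instances on the same n workers and n firms such that all workers except possibly one worker w₁ have identical preference orders in A and B. Then the polytope P_A ∩ P_B ⊆ ℝ^{W×F} (the points satisfying the fractional stable matching constraints of both A and B) equals the convex hull of the indicator vectors of the matchings that are stable under both A and B. In particular, every extreme point of P_A ∩ P_B is integral, and P_A ∩ P_B is nonempty if and only if some matching is stable under both A and B. -/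
open Finset in
/-- Membership in the fractional stable matching polytope P_I. -/
def InPolytope {n : ℕ} (I : SMInstance n) (x : Fin n → Fin n → ℝ) : Prop :=
  (∀ w f, 0 ≤ x w f) ∧
  (∀ w, ∑ f, x w f = 1) ∧
  (∀ f, ∑ w, x w f = 1) ∧
  (∀ w f, ∑ f' ∈ univ.filter (fun f' => I.wRank w f < I.wRank w f'), x w f' ≤
          ∑ w' ∈ univ.filter (fun w' => I.fRank f w' < I.fRank f w), x w' f)

/-- The 0/1 indicator vector of a matching M. -/
def indicVec {n : ℕ} (M : Fin n → Fin n) : Fin n → Fin n → ℝ :=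
  fun w f => if M w = f then 1 else 0

open Finset
namespace S15
variable {n : ℕ}

def cumW (I : SMInstance n) (x : Fin n → Fin n → ℝ) (w f : Fin n) : ℝ :=
  ∑ f' ∈ univ.filter (fun f' => I.wRank w f' ≤ I.wRank w f), x w f'

def cumF (I : SMInstance n) (x : Fin n → Fin n → ℝ) (w f : Fin n) : ℝ :=
  ∑ w' ∈ univ.filter (fun w' => I.fRank f w' < I.fRank f w), x w' f

lemma one_le_cum (I : SMInstance n) (x : Fin n → Fin n → ℝ) (hx : InPolytope I x)
    (w f : Fin n) : 1 ≤ cumW I x w f + cumF I x w f := by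
  have hsplit := Finset.sum_filter_add_sum_filter_not univ
    (fun f' => I.wRank w f' ≤ I.wRank w f) (x w)
  have hfe : univ.filter (fun f' => ¬ I.wRank w f' ≤ I.wRank w f)
      = univ.filter (fun f' => I.wRank w f < I.wRank w f') := by
    apply Finset.filter_congr; intro f' _; simp [not_le]
  rw [hfe, hx.2.1 w] at hsplit
  have hcon := hx.2.2.2 w f
  unfold cumW cumF
  linarith
lemma sum_lt_pairs {n : ℕ} (r : Fin n → Fin n) (hr : Function.Injective r) (a : Fin n → ℝ) :
    ∑ f, a f * ∑ f' ∈ univ.filter (fun f' => r f' < r f), a f'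
      = ((∑ f, a f) ^ 2 - ∑ f, (a f) ^ 2) / 2 := by
  have key : ∀ f f' : Fin n,
      a f * a f' = (if r f' < r f then a f * a f' else 0)
        + (if r f < r f' then a f * a f' else 0) + (if f = f' then a f * a f' else 0) := by
    intro f f'
    rcases lt_trichotomy (r f') (r f) with h | h | h
    · have hne : ¬ f = f' := fun e => absurd (congrArg r e).symm (ne_of_lt h)
      simp [h, not_lt.2 h.le, hne]
    · have he : f = f' := (hr h.symm)
      simp [he]
    · have hne : ¬ f = f' := fun e => absurd (congrArg r e) (ne_of_lt h)
      simp [h, not_lt.2 h.le, hne]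
  have hsq : (∑ f, a f) ^ 2 = ∑ f, ∑ f', a f * a f' := by
    rw [sq, Finset.sum_mul_sum]
  have hlt : ∀ f, a f * ∑ f' ∈ univ.filter (fun f' => r f' < r f), a f'
      = ∑ f', if r f' < r f then a f * a f' else 0 := by
    intro f
    rw [Finset.mul_sum, Finset.sum_filter]
  have hswap : (∑ f, ∑ f', if r f < r f' then a f * a f' else 0)
      = ∑ f, ∑ f', if r f' < r f then a f * a f' else 0 := by
    rw [Finset.sum_comm]
    exact Finset.sum_congr rfl fun f _ => Finset.sum_congr rfl fun f' _ => by
      rw [mul_comm]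
  have hdiag : (∑ f : Fin n, ∑ f', if f = f' then a f * a f' else 0) = ∑ f, (a f) ^ 2 := by
    refine Finset.sum_congr rfl fun f _ => ?_
    rw [Finset.sum_ite_eq univ f (fun f' => a f * a f')]
    simp [sq]
  have : (∑ f, a f) ^ 2
      = (∑ f, ∑ f', if r f' < r f then a f * a f' else 0) * 2 + ∑ f, (a f) ^ 2 := by
    rw [hsq]
    calc ∑ f, ∑ f', a f * a f'
        = ∑ f, ∑ f', ((if r f' < r f then a f * a f' else 0)
          + (if r f < r f' then a f * a f' else 0) + (if f = f' then a f * a f' else 0)) := by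
          exact Finset.sum_congr rfl fun f _ => Finset.sum_congr rfl fun f' _ => key f f'
      _ = (∑ f, ∑ f', if r f' < r f then a f * a f' else 0)
          + (∑ f, ∑ f', if r f < r f' then a f * a f' else 0)
          + (∑ f : Fin n, ∑ f', if f = f' then a f * a f' else 0) := by
          simp [Finset.sum_add_distrib]
      _ = _ := by rw [hswap, hdiag]; ring
  have h2 : ∑ f, a f * ∑ f' ∈ univ.filter (fun f' => r f' < r f), a f'
      = ∑ f, ∑ f', if r f' < r f then a f * a f' else 0 :=
    Finset.sum_congr rfl fun f _ => hlt f
  rw [h2]; linarith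

lemma sum_le_pairs {n : ℕ} (r : Fin n → Fin n) (hr : Function.Injective r) (a : Fin n → ℝ) :
    ∑ f, a f * ∑ f' ∈ univ.filter (fun f' => r f' ≤ r f), a f'
      = ((∑ f, a f) ^ 2 + ∑ f, (a f) ^ 2) / 2 := by
  have hsplit : ∀ f, (univ.filter (fun f' => r f' ≤ r f)) =
      insert f (univ.filter (fun f' => r f' < r f)) := by
    intro f
    ext f'
    simp only [mem_insert, mem_filter, mem_univ, true_and]
    constructor
    · intro h
      rcases lt_or_eq_of_le h with h | h
      · exact Or.inr h
      · exact Or.inl (hr h)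
    · rintro (rfl | h)
      · exact le_refl _
      · exact h.le
  have : ∑ f, a f * ∑ f' ∈ univ.filter (fun f' => r f' ≤ r f), a f'
      = ∑ f, (a f * a f + a f * ∑ f' ∈ univ.filter (fun f' => r f' < r f), a f') := by
    refine Finset.sum_congr rfl fun f _ => ?_
    rw [hsplit f, Finset.sum_insert (by simp), mul_add]
  rw [this, Finset.sum_add_distrib, sum_lt_pairs r hr a]
  have : ∑ f, a f * a f = ∑ f, (a f) ^ 2 := by simp [sq]
  rw [this]; ring

theorem tight (I : SMInstance n) (x : Fin n → Fin n → ℝ) (hx : InPolytope I x)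
    {w f : Fin n} (hpos : x w f ≠ 0) : cumW I x w f + cumF I x w f = 1 := by
  classical
  -- total weighted sum equals n
  have hW : ∀ w, ∑ f, x w f * cumW I x w f = (1 + ∑ f, (x w f) ^ 2) / 2 := by
    intro w
    have := sum_le_pairs (I.wRank w) (I.wRank_inj w) (x w)
    unfold cumW
    rw [this, hx.2.1 w]; ring
  have hF : ∀ f, ∑ w, x w f * cumF I x w f = (1 - ∑ w, (x w f) ^ 2) / 2 := by
    intro f
    have := sum_lt_pairs (I.fRank f) (I.fRank_inj f) (fun w => x w f)
    unfold cumF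
    rw [this, hx.2.2.1 f]; ring
  have hswap2 : ∑ w, ∑ f, (x w f) ^ 2 = ∑ f, ∑ w, (x w f) ^ 2 := Finset.sum_comm
  have hn' : (Finset.univ : Finset (Fin n)).card = n := Finset.card_univ.trans (Fintype.card_fin n)
  have htotal : ∑ w, ∑ f, x w f * (cumW I x w f + cumF I x w f - 1) = 0 := by
    have e1 : ∑ w, ∑ f, x w f * (cumW I x w f + cumF I x w f - 1)
        = (∑ w, ∑ f, x w f * cumW I x w f) + (∑ w, ∑ f, x w f * cumF I x w f)
          - ∑ w, ∑ f, x w f := by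
      have : ∀ w f : Fin n, x w f * (cumW I x w f + cumF I x w f - 1)
          = x w f * cumW I x w f + x w f * cumF I x w f - x w f := fun w f => by ring
      simp only [this, Finset.sum_sub_distrib, Finset.sum_add_distrib]
    have e2 : ∑ w, ∑ f, x w f * cumW I x w f = (n + ∑ w, ∑ f, (x w f) ^ 2) / 2 := by
      rw [Finset.sum_congr rfl fun w _ => hW w, ← Finset.sum_div,
        Finset.sum_add_distrib]
      simp [hn']
    have e3 : ∑ w, ∑ f, x w f * cumF I x w f = (n - ∑ w, ∑ f, (x w f) ^ 2) / 2 := by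
      rw [Finset.sum_comm]
      rw [Finset.sum_congr rfl fun f _ => hF f, ← Finset.sum_div,
        Finset.sum_sub_distrib, ← hswap2]
      simp [hn']
    have e4 : ∑ w, ∑ f, x w f = n := by
      rw [Finset.sum_congr rfl fun w _ => hx.2.1 w]; simp [hn']
    rw [e1, e2, e3, e4]; ring
  have hnn : ∀ w ∈ (univ : Finset (Fin n)), 0 ≤ ∑ f, x w f * (cumW I x w f + cumF I x w f - 1) := by
    intro w _
    refine Finset.sum_nonneg fun f _ => mul_nonneg (hx.1 w f) ?_
    linarith [one_le_cum I x hx w f]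
  have h0 := (Finset.sum_eq_zero_iff_of_nonneg hnn).1 htotal w (Finset.mem_univ w)
  have hnn2 : ∀ f ∈ (univ : Finset (Fin n)), 0 ≤ x w f * (cumW I x w f + cumF I x w f - 1) := by
    intro f _
    exact mul_nonneg (hx.1 w f) (by linarith [one_le_cum I x hx w f])
  have h1 := (Finset.sum_eq_zero_iff_of_nonneg hnn2).1 h0 f (Finset.mem_univ f)
  rcases mul_eq_zero.1 h1 with h | h
  · exact absurd h hpos
  · linarith

/-- existence of the bottom-quantile map with all key properties -/
lemma exists_worst (I : SMInstance n) (x : Fin n → Fin n → ℝ) (hx : InPolytope I x) :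
    ∃ M : Fin n → Fin n, (∀ w, x w (M w) ≠ 0) ∧
      (∀ w f', x w f' ≠ 0 → I.wRank w f' ≤ I.wRank w (M w)) ∧
      (∀ w w', I.fRank (M w) w' < I.fRank (M w) w → x w' (M w) = 0) := by
  classical
  have hne : ∀ w, (univ.filter (fun f => x w f ≠ 0)).Nonempty := by
    intro w
    rw [Finset.filter_nonempty_iff]
    by_contra h
    push_neg at h
    have : ∑ f, x w f = 0 := Finset.sum_eq_zero fun f _ => h f (Finset.mem_univ f)
    rw [hx.2.1 w] at this
    norm_num at this
  choose Mf hMf hmax using fun w =>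
    Finset.exists_max_image (univ.filter (fun f => x w f ≠ 0)) (I.wRank w) (hne w)
  refine ⟨Mf, fun w => (Finset.mem_filter.1 (hMf w)).2, ?_, ?_⟩
  · intro w f' hf'
    exact hmax w f' (Finset.mem_filter.2 ⟨Finset.mem_univ f', hf'⟩)
  · intro w w' hlt
    -- cumW at (w, Mf w) is 1
    have hsupp : x w (Mf w) ≠ 0 := (Finset.mem_filter.1 (hMf w)).2
    have hcw : cumW I x w (Mf w) = 1 := by
      have : cumW I x w (Mf w) = ∑ f', x w f' := by
        unfold cumW
        refine Finset.sum_subset (Finset.filter_subset _ _) ?_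
        intro f' _ hnm
        simp only [Finset.mem_filter, Finset.mem_univ, true_and, not_le] at hnm
        by_contra h
        exact absurd (hmax w f' (Finset.mem_filter.2 ⟨Finset.mem_univ f', h⟩))
          (not_le.2 hnm)
      rw [this, hx.2.1 w]
    have hcf : cumF I x w (Mf w) = 0 := by
      have := tight I x hx hsupp
      linarith
    have := (Finset.sum_eq_zero_iff_of_nonneg
      (fun w'' _ => hx.1 w'' (Mf w))).1 hcf w'
    exact this (Finset.mem_filter.2 ⟨Finset.mem_univ w', hlt⟩)

lemma worst_inj (I : SMInstance n) (x : Fin n → Fin n → ℝ) (M : Fin n → Fin n)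
    (h1 : ∀ w, x w (M w) ≠ 0)
    (h3 : ∀ w w', I.fRank (M w) w' < I.fRank (M w) w → x w' (M w) = 0) :
    Function.Bijective M := by
  rw [← Finite.injective_iff_bijective]
  intro w w' he
  by_contra hne
  rcases lt_trichotomy (I.fRank (M w) w) (I.fRank (M w) w') with h | h | h
  · rw [he] at h
    have := h3 w' w h
    rw [← he] at this
    exact h1 w this
  · exact hne (I.fRank_inj (M w) h)
  · have := h3 w w' h
    rw [he] at this
    exact h1 w' this

lemma worst_stable (I : SMInstance n) (x : Fin n → Fin n → ℝ) (hx : InPolytope I x)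
    (M : Fin n → Fin n)
    (h1 : ∀ w, x w (M w) ≠ 0)
    (h3 : ∀ w w', I.fRank (M w) w' < I.fRank (M w) w → x w' (M w) = 0) :
    IsStable I M := by
  refine ⟨worst_inj I x M h1 h3, ?_⟩
  rintro w f ⟨hne, hpref, w'', hMw'', hfr⟩
  have hcon := hx.2.2.2 w f
  have hL : x w (M w) ≤ ∑ f' ∈ univ.filter (fun f' => I.wRank w f < I.wRank w f'), x w f' :=
    Finset.single_le_sum (fun f' _ => hx.1 w f')
      (Finset.mem_filter.2 ⟨Finset.mem_univ _, hpref⟩)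
  have hR : ∑ w' ∈ univ.filter (fun w' => I.fRank f w' < I.fRank f w), x w' f = 0 := by
    refine Finset.sum_eq_zero fun w' hw' => ?_
    have hlt : I.fRank f w' < I.fRank f w := (Finset.mem_filter.1 hw').2
    have := h3 w'' w' (by rw [hMw'']; exact hlt.trans hfr)
    rwa [hMw''] at this
  have hxpos : 0 < x w (M w) := lt_of_le_of_ne (hx.1 w (M w)) (Ne.symm (h1 w))
  rw [hR] at hcon
  linarith

lemma bij_agree_eq {w₁ : Fin n} (M M' : Fin n → Fin n)
    (hM : Function.Bijective M) (hM' : Function.Bijective M')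
    (h : ∀ w, w ≠ w₁ → M w = M' w) : M = M' := by
  funext w
  by_cases hw : w = w₁
  · rw [hw]
    by_contra hne
    obtain ⟨u, hu⟩ := hM.2 (M' w₁)
    have huw : u ≠ w₁ := fun e => hne (e ▸ hu)
    have : M' u = M' w₁ := by rw [← h u huw, hu]
    exact huw (hM'.1 this)
  · exact h w hw

lemma indic_mem (I : SMInstance n) (M : Fin n → Fin n) (hM : IsStable I M) :
    InPolytope I (indicVec M) := by
  classical
  obtain ⟨hbij, hstab⟩ := hM
  refine ⟨fun w f => by unfold indicVec; split <;> norm_num, ?_, ?_, ?_⟩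
  · intro w
    unfold indicVec
    rw [Finset.sum_ite_eq univ (M w) (fun _ => (1:ℝ))]
    simp
  · intro f
    show ∑ w, (fun t => if t = f then (1:ℝ) else 0) (M w) = 1
    rw [Function.Bijective.sum_comp hbij (fun t => if t = f then (1:ℝ) else 0)]
    rw [Finset.sum_ite_eq' univ f (fun _ => (1:ℝ))]
    simp
  · intro w f
    show (∑ f' ∈ univ.filter (fun f' => I.wRank w f < I.wRank w f'),
        if M w = f' then (1:ℝ) else 0) ≤ _
    rw [Finset.sum_ite_eq (univ.filter (fun f' => I.wRank w f < I.wRank w f')) (M w)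
      (fun _ => (1:ℝ))]
    by_cases hm : M w ∈ univ.filter (fun f' => I.wRank w f < I.wRank w f')
    · have hm' : I.wRank w f < I.wRank w (M w) := (Finset.mem_filter.1 hm).2
      obtain ⟨w', hw'⟩ := hbij.2 f
      have hne : M w ≠ f := fun e => absurd (e ▸ hm') (lt_irrefl _)
      have hnb := hstab w f
      unfold Blocking at hnb
      push_neg at hnb
      have hwr := hnb hne hm' w' hw'
      have hne' : w' ≠ w := fun e => hne (by rw [← e, hw'])
      have hlt : I.fRank f w' < I.fRank f w :=
        lt_of_le_of_ne hwr (fun e => hne' (I.fRank_inj f e))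
      have hs := Finset.single_le_sum
        (s := univ.filter (fun w'' => I.fRank f w'' < I.fRank f w))
        (f := fun w'' => if M w'' = f then (1:ℝ) else 0)
        (fun w'' _ => by split <;> norm_num)
        (Finset.mem_filter.2 ⟨Finset.mem_univ w', hlt⟩)
      rw [if_pos hw'] at hs
      rw [if_pos hm]
      exact hs
    · rw [if_neg hm]
      exact Finset.sum_nonneg fun w'' _ => by simp only [indicVec]; split <;> norm_num

lemma combo_mem (I : SMInstance n) (x y : Fin n → Fin n → ℝ) {a b : ℝ}
    (hx : InPolytope I x) (hy : InPolytope I y) (ha : 0 ≤ a) (hb : 0 ≤ b)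
    (hab : a + b = 1) : InPolytope I (fun w f => a * x w f + b * y w f) := by
  refine ⟨fun w f => add_nonneg (mul_nonneg ha (hx.1 w f)) (mul_nonneg hb (hy.1 w f)),
    ?_, ?_, ?_⟩
  · intro w
    rw [Finset.sum_add_distrib, ← Finset.mul_sum, ← Finset.mul_sum, hx.2.1 w, hy.2.1 w]
    linarith
  · intro f
    rw [Finset.sum_add_distrib, ← Finset.mul_sum, ← Finset.mul_sum, hx.2.2.1 f, hy.2.2.1 f]
    linarith
  · intro w f
    rw [Finset.sum_add_distrib, Finset.sum_add_distrib,
      ← Finset.mul_sum, ← Finset.mul_sum, ← Finset.mul_sum, ← Finset.mul_sum]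
    have h1 := hx.2.2.2 w f
    have h2 := hy.2.2.2 w f
    nlinarith

lemma indic_row (M : Fin n → Fin n) (w : Fin n) : ∑ f, indicVec M w f = 1 := by
  unfold indicVec
  rw [Finset.sum_ite_eq univ (M w) (fun _ => (1:ℝ))]
  simp

lemma indic_col (M : Fin n → Fin n) (hbij : Function.Bijective M) (f : Fin n) :
    ∑ w, indicVec M w f = 1 := by
  show ∑ w, (fun t => if t = f then (1:ℝ) else 0) (M w) = 1
  rw [Function.Bijective.sum_comp hbij (fun t => if t = f then (1:ℝ) else 0)]
  rw [Finset.sum_ite_eq' univ f (fun _ => (1:ℝ))]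
  simp

lemma step_mem (I : SMInstance n) (x : Fin n → Fin n → ℝ) (hx : InPolytope I x)
    (M : Fin n → Fin n) (hbij : Function.Bijective M)
    (h2 : ∀ w f', x w f' ≠ 0 → I.wRank w f' ≤ I.wRank w (M w))
    {lam : ℝ} (hl0 : 0 < lam) (hl1 : lam < 1)
    (hlmin : ∀ w, lam ≤ x w (M w)) :
    InPolytope I (fun w f => (x w f - lam * indicVec M w f) / (1 - lam)) := by
  classical
  have hpos : (0:ℝ) < 1 - lam := by linarith
  refine ⟨?_, ?_, ?_, ?_⟩
  · intro w f
    apply div_nonneg _ hpos.le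
    unfold indicVec
    by_cases h : M w = f
    · rw [if_pos h]
      have := hlmin w
      rw [h] at this
      linarith
    · rw [if_neg h]
      have := hx.1 w f
      linarith
  · intro w
    rw [← Finset.sum_div, Finset.sum_sub_distrib, ← Finset.mul_sum, hx.2.1 w,
      indic_row M w]
    field_simp
  · intro f
    rw [← Finset.sum_div, Finset.sum_sub_distrib, ← Finset.mul_sum, hx.2.2.1 f,
      indic_col M hbij f]
    field_simp
  · intro w f
    rw [← Finset.sum_div, ← Finset.sum_div, div_le_div_iff_of_pos_right hpos,
      Finset.sum_sub_distrib, Finset.sum_sub_distrib, ← Finset.mul_sum, ← Finset.mul_sum]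
    set Lfilt := univ.filter (fun f' => I.wRank w f < I.wRank w f') with hLf
    set Rfilt := univ.filter (fun w' => I.fRank f w' < I.fRank f w) with hRf
    have hcon := hx.2.2.2 w f
    rw [← hLf, ← hRf] at hcon
    have hLy : ∑ f' ∈ Lfilt, indicVec M w f' = if M w ∈ Lfilt then 1 else 0 := by
      unfold indicVec
      exact Finset.sum_ite_eq Lfilt (M w) (fun _ => (1:ℝ))
    obtain ⟨wf, hwf⟩ := hbij.2 f
    have hyw : ∀ w', indicVec M w' f = if w' = wf then (1:ℝ) else 0 := by
      intro w'
      unfold indicVec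
      by_cases h : w' = wf
      · rw [if_pos h, if_pos (by rw [h, hwf])]
      · rw [if_neg h, if_neg (fun e => h (hbij.1 (e.trans hwf.symm)))]
    have hRy : ∑ w' ∈ Rfilt, indicVec M w' f = if wf ∈ Rfilt then 1 else 0 := by
      rw [Finset.sum_congr rfl fun w' _ => hyw w']
      exact Finset.sum_ite_eq' Rfilt wf (fun _ => (1:ℝ))
    rw [hLy, hRy]
    by_cases hc : M w ∈ Lfilt
    · rw [if_pos hc]
      by_cases hc2 : wf ∈ Rfilt
      · rw [if_pos hc2]; linarith
      · rw [if_neg hc2]; linarith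
    · rw [if_neg hc]
      have hLx : ∑ f' ∈ Lfilt, x w f' = 0 := by
        refine Finset.sum_eq_zero fun f' hf' => ?_
        have hf'lt : I.wRank w f < I.wRank w f' := (Finset.mem_filter.1 hf').2
        have hMle : ¬ I.wRank w f < I.wRank w (M w) := fun h =>
          hc (Finset.mem_filter.2 ⟨Finset.mem_univ _, h⟩)
        by_contra hne
        have := h2 w f' hne
        exact hMle (lt_of_lt_of_le hf'lt this |>.trans_le (le_refl _)) |>.elim
      rw [hLx]
      by_cases hc2 : wf ∈ Rfilt
      · rw [if_pos hc2]
        have hRx : lam ≤ ∑ w' ∈ Rfilt, x w' f := by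
          have hs := Finset.single_le_sum (s := Rfilt) (f := fun w' => x w' f)
            (fun w' _ => hx.1 w' f) hc2
          have : lam ≤ x wf f := by
            have := hlmin wf
            rwa [hwf] at this
          linarith
        linarith
      · rw [if_neg hc2]
        have : 0 ≤ ∑ w' ∈ Rfilt, x w' f := Finset.sum_nonneg fun w' _ => hx.1 w' f
        linarith

noncomputable def supp (x : Fin n → Fin n → ℝ) : Finset (Fin n × Fin n) :=
  @Finset.filter _ (fun p => x p.1 p.2 ≠ 0) (Classical.decPred _) (univ ×ˢ univ)

lemma mem_supp {x : Fin n → Fin n → ℝ} {p : Fin n × Fin n} :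
    p ∈ supp x ↔ x p.1 p.2 ≠ 0 := by
  simp only [supp, Finset.mem_filter, Finset.mem_product, Finset.mem_univ, true_and,
    and_true]

lemma decomp (hn : 1 ≤ n) (A B : SMInstance n) (w₁ : Fin n)
    (hW : ∀ w, w ≠ w₁ → A.wRank w = B.wRank w) :
    ∀ k (x : Fin n → Fin n → ℝ), (supp x).card ≤ k → InPolytope A x → InPolytope B x →
      x ∈ convexHull ℝ {x : Fin n → Fin n → ℝ |
        ∃ M, IsStable A M ∧ IsStable B M ∧ x = indicVec M} := by
  have hw0 : Nonempty (Fin n) := ⟨⟨0, hn⟩⟩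
  intro k
  induction k with
  | zero =>
    intro x hcard hxA hxB
    exfalso
    have hempty : supp x = ∅ := Finset.card_eq_zero.1 (Nat.le_zero.1 hcard)
    obtain ⟨w⟩ := hw0
    have : ∑ f, x w f = 0 := Finset.sum_eq_zero fun f _ => by
      by_contra h
      have : (w, f) ∈ supp x := mem_supp.2 h
      rw [hempty] at this
      exact absurd this (Finset.notMem_empty _)
    rw [hxA.2.1 w] at this
    norm_num at this
  | succ k ih =>
    intro x hcard hxA hxB
    obtain ⟨MA, h1A, h2A, h3A⟩ := exists_worst A x hxA
    obtain ⟨MB, h1B, h2B, h3B⟩ := exists_worst B x hxB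
    have hbijA : Function.Bijective MA := worst_inj A x MA h1A h3A
    have hbijB : Function.Bijective MB := worst_inj B x MB h1B h3B
    have hMeq : MA = MB := by
      apply bij_agree_eq (w₁ := w₁) MA MB hbijA hbijB
      intro w hw
      have e1 : B.wRank w (MA w) ≤ B.wRank w (MB w) := h2B w (MA w) (h1A w)
      have e2 : A.wRank w (MB w) ≤ A.wRank w (MA w) := h2A w (MB w) (h1B w)
      rw [hW w hw] at e2
      exact (B.wRank_inj w (le_antisymm e1 e2)).symm ▸ rfl
    have hstabA : IsStable A MA := worst_stable A x hxA MA h1A h3A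
    have hstabB : IsStable B MA := by
      rw [hMeq]; exact worst_stable B x hxB MB h1B h3B
    -- the minimum entry along MA
    obtain ⟨w₀, _, hmin⟩ := Finset.exists_min_image (univ : Finset (Fin n))
      (fun w => x w (MA w)) Finset.univ_nonempty
    set lam := x w₀ (MA w₀) with hlam
    have hlmin : ∀ w, lam ≤ x w (MA w) := fun w => hmin w (Finset.mem_univ w)
    have hl0 : 0 < lam := lt_of_le_of_ne (hxA.1 w₀ (MA w₀)) (Ne.symm (h1A w₀))
    have hl1 : lam ≤ 1 := by
      have hs := Finset.single_le_sum (s := (univ : Finset (Fin n)))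
        (f := fun f => x w₀ f) (fun f _ => hxA.1 w₀ f) (Finset.mem_univ (MA w₀))
      rw [hxA.2.1 w₀] at hs
      exact hs
    by_cases hone : lam = 1
    · -- x is exactly the indicator vector of MA
      have hxind : x = indicVec MA := by
        funext w f
        have hle1 : x w (MA w) ≤ 1 := by
          have hs := Finset.single_le_sum (s := (univ : Finset (Fin n)))
            (f := fun f => x w f) (fun f _ => hxA.1 w f) (Finset.mem_univ (MA w))
          rw [hxA.2.1 w] at hs
          exact hs
        have heq1 : x w (MA w) = 1 := le_antisymm hle1 (hone ▸ hlmin w)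
        have hrest : ∑ f' ∈ univ.erase (MA w), x w f' = 0 := by
          have := Finset.add_sum_erase univ (fun f' => x w f') (Finset.mem_univ (MA w))
          rw [hxA.2.1 w] at this
          linarith [this, heq1]
        unfold indicVec
        by_cases h : MA w = f
        · rw [if_pos h, ← h, heq1]
        · rw [if_neg h]
          exact (Finset.sum_eq_zero_iff_of_nonneg (fun f' _ => hxA.1 w f')).1 hrest f
            (Finset.mem_erase.2 ⟨fun e => h e.symm, Finset.mem_univ f⟩)
      exact subset_convexHull ℝ _ ⟨MA, hstabA, hstabB, hxind⟩
    · have hl1' : lam < 1 := lt_of_le_of_ne hl1 hone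
      set y := indicVec MA with hy
      set x' := fun w f => (x w f - lam * indicVec MA w f) / (1 - lam) with hx'
      have hxA' : InPolytope A x' := step_mem A x hxA MA hbijA h2A hl0 hl1' hlmin
      have hxB' : InPolytope B x' := by
        refine step_mem B x hxB MA hbijA ?_ hl0 hl1' hlmin
        intro w f' hf'
        rw [hMeq]
        exact h2B w f' hf'
      have hsub : supp x' ⊆ supp x := by
        intro p hp
        rw [mem_supp] at hp ⊢
        by_contra h0
        apply hp
        show (x p.1 p.2 - lam * indicVec MA p.1 p.2) / (1 - lam) = 0
        have hy0 : indicVec MA p.1 p.2 = 0 := by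
          unfold indicVec
          rw [if_neg]
          intro e
          exact h1A p.1 (by rw [e]; exact h0)
        rw [h0, hy0]
        ring
      have hnotin : (w₀, MA w₀) ∉ supp x' := by
        rw [mem_supp, ne_eq, not_not]
        show (x w₀ (MA w₀) - lam * indicVec MA w₀ (MA w₀)) / (1 - lam) = 0
        have : indicVec MA w₀ (MA w₀) = 1 := by unfold indicVec; rw [if_pos rfl]
        rw [this, ← hlam]
        ring
      have hin : (w₀, MA w₀) ∈ supp x := mem_supp.2 (h1A w₀)
      have hss : supp x' ⊂ supp x :=
        ⟨hsub, fun hcontra => hnotin (hcontra hin)⟩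
      have hcard' : (supp x').card ≤ k := by
        have := Finset.card_lt_card hss
        omega
      have hx'mem := ih x' hcard' hxA' hxB'
      have hymem : y ∈ convexHull ℝ {x : Fin n → Fin n → ℝ |
          ∃ M, IsStable A M ∧ IsStable B M ∧ x = indicVec M} :=
        subset_convexHull ℝ _ ⟨MA, hstabA, hstabB, rfl⟩
      have hcomb := (convex_convexHull ℝ {x : Fin n → Fin n → ℝ |
          ∃ M, IsStable A M ∧ IsStable B M ∧ x = indicVec M})
        hymem hx'mem hl0.le (by linarith : (0:ℝ) ≤ 1 - lam) (by ring)
      have hxeq : x = lam • y + (1 - lam) • x' := by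
        funext w f
        show x w f = lam * indicVec MA w f + (1 - lam) * ((x w f - lam * indicVec MA w f) / (1 - lam))
        have h10 : (1:ℝ) - lam ≠ 0 := by linarith
        field_simp
        ring
      rw [hxeq]
      exact hcomb

end S15

/-- for (1,n) instances A and B, the polytope P_A ∩ P_B equals the convex
hull of the indicator vectors of the matchings stable under both A and B; in particular
every extreme point of P_A ∩ P_B is integral, and P_A ∩ P_B is nonempty iff some
matching is stable under both A and B. -/
theorem stmt15 {n : ℕ} (hn : 1 ≤ n) (A B : SMInstance n) (w₁ : Fin n)
    (hW : ∀ w, w ≠ w₁ → A.wRank w = B.wRank w) :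
    ({x : Fin n → Fin n → ℝ | InPolytope A x ∧ InPolytope B x} =
      convexHull ℝ {x : Fin n → Fin n → ℝ |
        ∃ M, IsStable A M ∧ IsStable B M ∧ x = indicVec M}) ∧
    (∀ x ∈ Set.extremePoints ℝ
        {x : Fin n → Fin n → ℝ | InPolytope A x ∧ InPolytope B x},
      ∀ w f, x w f = 0 ∨ x w f = 1) ∧
    ((∃ x : Fin n → Fin n → ℝ, InPolytope A x ∧ InPolytope B x) ↔
      ∃ M, IsStable A M ∧ IsStable B M) := by
  classical
  have heq : {x : Fin n → Fin n → ℝ | InPolytope A x ∧ InPolytope B x} =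
      convexHull ℝ {x : Fin n → Fin n → ℝ |
        ∃ M, IsStable A M ∧ IsStable B M ∧ x = indicVec M} := by
    apply Set.Subset.antisymm
    · rintro x ⟨hxA, hxB⟩
      exact S15.decomp hn A B w₁ hW (S15.supp x).card x le_rfl hxA hxB
    · apply convexHull_min
      · rintro x ⟨M, hA, hB, rfl⟩
        exact ⟨S15.indic_mem A M hA, S15.indic_mem B M hB⟩
      · intro x hx y hy a b ha hb hab
        have hA := S15.combo_mem A x y hx.1 hy.1 ha hb hab
        have hB := S15.combo_mem B x y hx.2 hy.2 ha hb hab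
        exact ⟨hA, hB⟩
  refine ⟨heq, ?_, ?_⟩
  · intro x hx w f
    rw [heq] at hx
    obtain ⟨M, _, _, rfl⟩ := extremePoints_convexHull_subset hx
    unfold indicVec
    by_cases h : M w = f
    · right; rw [if_pos h]
    · left; rw [if_neg h]
  · constructor
    · rintro ⟨x, hxA, hxB⟩
      have hmem : x ∈ convexHull ℝ {x : Fin n → Fin n → ℝ |
          ∃ M, IsStable A M ∧ IsStable B M ∧ x = indicVec M} := by
        rw [← heq]; exact ⟨hxA, hxB⟩
      obtain ⟨y, M, hA, hB, _⟩ := convexHull_nonempty_iff.1 ⟨x, hmem⟩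
      exact ⟨M, hA, hB⟩
    · rintro ⟨M, hA, hB⟩
      exact ⟨indicVec M, S15.indic_mem A M hA, S15.indic_mem B M hB⟩
end

section
/- Let A₁, A₂, …, A_k (k ≥ 2) be stable matching instances on the same n workers and n firms such that all workers except possibly one worker w₁ have identical preference orders in all of the instances. Then the set L' = M_{A_1} ∩ M_{A_2} ∩ … ∩ M_{A_k} is closed under the join and meet operations of each lattice L_{A_i}, and these join and meet operations coincide on L' across all the instances; in particular, L' is a sublattice of each L_{A_i}. -/
namespace StmtAux

variable {n : ℕ}

lemma join_comm (I : SMInstance n) (M₁ M₂ : Fin n → Fin n) :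
    joinMap I M₁ M₂ = joinMap I M₂ M₁ := by
  funext w
  unfold joinMap
  rcases lt_trichotomy (I.wRank w (M₁ w)) (I.wRank w (M₂ w)) with h | h | h
  · rw [if_pos h, if_neg (asymm h)]
  · have hM : M₁ w = M₂ w := I.wRank_inj w h
    simp [hM]
  · rw [if_neg (asymm h), if_pos h]

lemma mem_pair_join (I : SMInstance n) (M₁ M₂ : Fin n → Fin n) (w : Fin n) :
    joinMap I M₁ M₂ w = M₁ w ∨ joinMap I M₁ M₂ w = M₂ w := by
  unfold joinMap; split
  · exact Or.inr rfl
  · exact Or.inl rfl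

lemma mem_pair_meet (I : SMInstance n) (M₁ M₂ : Fin n → Fin n) (w : Fin n) :
    meetMap I M₁ M₂ w = M₁ w ∨ meetMap I M₁ M₂ w = M₂ w := by
  unfold meetMap; split
  · exact Or.inl rfl
  · exact Or.inr rfl

lemma cond_of_join_ne₁ {I : SMInstance n} {M₁ M₂ : Fin n → Fin n} {w : Fin n}
    (h : joinMap I M₁ M₂ w ≠ M₁ w) :
    I.wRank w (M₁ w) < I.wRank w (M₂ w) := by
  unfold joinMap at h
  split at h
  · assumption
  · exact absurd rfl h

lemma meet_of_not_join₁ {I : SMInstance n} {M₁ M₂ : Fin n → Fin n} {w : Fin n}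
    (h : joinMap I M₁ M₂ w ≠ M₁ w) : meetMap I M₁ M₂ w = M₁ w := by
  have hc := cond_of_join_ne₁ h
  unfold meetMap
  rw [if_pos hc]

lemma meet_of_not_join₂ {I : SMInstance n} {M₁ M₂ : Fin n → Fin n} {w : Fin n}
    (h : joinMap I M₁ M₂ w ≠ M₂ w) : meetMap I M₁ M₂ w = M₂ w := by
  unfold joinMap at h
  unfold meetMap
  split at h
  · exact absurd rfl h
  · rw [if_neg ‹¬ _›]

lemma meet_le₁ (I : SMInstance n) (M₁ M₂ : Fin n → Fin n) (w : Fin n) :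
    I.wRank w (meetMap I M₁ M₂ w) ≤ I.wRank w (M₁ w) := by
  unfold meetMap; split
  · exact le_rfl
  · exact le_of_not_gt ‹¬ _›

lemma meet_le₂ (I : SMInstance n) (M₁ M₂ : Fin n → Fin n) (w : Fin n) :
    I.wRank w (meetMap I M₁ M₂ w) ≤ I.wRank w (M₂ w) := by
  unfold meetMap; split
  · exact le_of_lt ‹_›
  · exact le_rfl

/-- Symmetric core of the injectivity of the meet. -/
lemma meet_inj_aux {I : SMInstance n} {M₁ M₂ : Fin n → Fin n}
    (h₁ : IsStable I M₁) (h₂ : IsStable I M₂) {w w' : Fin n} (hwne : w ≠ w')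
    (hA : M₁ w = M₂ w')
    (hle : I.wRank w (M₁ w) ≤ I.wRank w (M₂ w))
    (hle' : I.wRank w' (M₂ w') ≤ I.wRank w' (M₁ w')) : False := by
  have hM2w : M₂ w ≠ M₂ w' := fun e => hwne (h₂.1.1 e)
  have hM1w' : M₁ w' ≠ M₁ w := fun e => hwne (h₁.1.1 e.symm)
  have hlt : I.wRank w (M₂ w') < I.wRank w (M₂ w) := by
    rw [← hA]
    exact lt_of_le_of_ne hle (fun e => hM2w ((I.wRank_inj w e).symm.trans hA))
  have hlt' : I.wRank w' (M₂ w') < I.wRank w' (M₁ w') :=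
    lt_of_le_of_ne hle' (fun e => hM1w' ((I.wRank_inj w' e).symm.trans hA.symm))
  have hfne : I.fRank (M₂ w') w ≠ I.fRank (M₂ w') w' :=
    fun e => hwne (I.fRank_inj (M₂ w') e)
  rcases hfne.lt_or_gt with h | h
  · exact h₂.2 w (M₂ w') ⟨hM2w, hlt, w', rfl, h⟩
  · apply h₁.2 w' (M₁ w)
    refine ⟨hM1w', ?_, w, rfl, ?_⟩
    · rw [hA]
      exact hlt'
    · rw [hA]
      exact h

lemma meet_inj {I : SMInstance n} {M₁ M₂ : Fin n → Fin n}
    (h₁ : IsStable I M₁) (h₂ : IsStable I M₂) :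
    Function.Injective (meetMap I M₁ M₂) := by
  intro w w' he
  by_contra hwne
  rcases mem_pair_meet I M₁ M₂ w with hw | hw <;>
    rcases mem_pair_meet I M₁ M₂ w' with hw' | hw'
  · exact hwne (h₁.1.1 (hw.symm.trans (he.trans hw')))
  · exact meet_inj_aux h₁ h₂ hwne (hw.symm.trans (he.trans hw'))
      (by rw [← hw]; exact meet_le₂ I M₁ M₂ w)
      (by rw [← hw']; exact meet_le₁ I M₁ M₂ w')
  · exact meet_inj_aux (M₁ := M₂) (M₂ := M₁) h₂ h₁ hwne (hw.symm.trans (he.trans hw'))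
      (by rw [← hw]; exact meet_le₁ I M₁ M₂ w)
      (by rw [← hw']; exact meet_le₂ I M₁ M₂ w')
  · exact hwne (h₂.1.1 (hw.symm.trans (he.trans hw')))

lemma meet_bij {I : SMInstance n} {M₁ M₂ : Fin n → Fin n}
    (h₁ : IsStable I M₁) (h₂ : IsStable I M₂) :
    Function.Bijective (meetMap I M₁ M₂) :=
  Finite.injective_iff_bijective.mp (meet_inj h₁ h₂)

lemma join_bij {I : SMInstance n} {M₁ M₂ : Fin n → Fin n}
    (h₁ : IsStable I M₁) (h₂ : IsStable I M₂) :
    Function.Bijective (joinMap I M₁ M₂) := by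
  rw [← Finite.surjective_iff_bijective]
  intro f
  obtain ⟨wa, hwa⟩ := h₁.1.2 f
  by_cases ha : joinMap I M₁ M₂ wa = f
  · exact ⟨wa, ha⟩
  obtain ⟨wb, hwb⟩ := h₂.1.2 f
  by_cases hb : joinMap I M₁ M₂ wb = f
  · exact ⟨wb, hb⟩
  exfalso
  have ma : meetMap I M₁ M₂ wa = f := by
    rw [← hwa] at ha ⊢
    exact meet_of_not_join₁ ha
  have mb : meetMap I M₁ M₂ wb = f := by
    rw [← hwb] at hb ⊢
    exact meet_of_not_join₂ hb
  have hab : wa = wb := meet_inj h₁ h₂ (ma.trans mb.symm)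
  subst hab
  rcases mem_pair_join I M₁ M₂ wa with h | h
  · exact ha (h.trans hwa)
  · exact ha (h.trans hwb)

lemma meet_stable {I : SMInstance n} {M₁ M₂ : Fin n → Fin n}
    (h₁ : IsStable I M₁) (h₂ : IsStable I M₂) :
    IsStable I (meetMap I M₁ M₂) := by
  refine ⟨meet_bij h₁ h₂, ?_⟩
  rintro w f ⟨hne, hlt, w', hw', hfr⟩
  have hlt1 : I.wRank w f < I.wRank w (M₁ w) := lt_of_lt_of_le hlt (meet_le₁ I M₁ M₂ w)
  have hlt2 : I.wRank w f < I.wRank w (M₂ w) := lt_of_lt_of_le hlt (meet_le₂ I M₁ M₂ w)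
  have hM1 : M₁ w ≠ f := fun e => absurd hlt1 (by rw [e]; exact lt_irrefl _)
  have hM2 : M₂ w ≠ f := fun e => absurd hlt2 (by rw [e]; exact lt_irrefl _)
  rcases mem_pair_meet I M₁ M₂ w' with h | h
  · exact h₁.2 w f ⟨hM1, hlt1, w', h.symm.trans hw', hfr⟩
  · exact h₂.2 w f ⟨hM2, hlt2, w', h.symm.trans hw', hfr⟩

/-- Core of the stability of the join, for the case `joinMap w = M₁ w`. -/
lemma join_aux {I : SMInstance n} {M₁ M₂ : Fin n → Fin n}
    (h₁ : IsStable I M₁) (h₂ : IsStable I M₂) {w f : Fin n}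
    (hlt : I.wRank w f < I.wRank w (M₁ w)) {w' : Fin n}
    (hw' : joinMap I M₁ M₂ w' = f) (hfr : I.fRank f w < I.fRank f w') : False := by
  have hM1wf : M₁ w ≠ f := fun e => absurd hlt (by rw [e]; exact lt_irrefl _)
  by_cases hc : M₁ w' = f
  · exact h₁.2 w f ⟨hM1wf, hlt, w', hc, hfr⟩
  · have hc2 : M₂ w' = f := by
      rcases mem_pair_join I M₁ M₂ w' with h | h
      · exact absurd (h.symm.trans hw') hc
      · exact h.symm.trans hw'
    obtain ⟨w'', hw''⟩ := h₁.1.2 f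
    have hne'' : w'' ≠ w' := fun e => hc (e ▸ hw'')
    have hjne : joinMap I M₁ M₂ w'' ≠ f :=
      fun e => hne'' ((join_bij h₁ h₂).1 (e.trans hw'.symm))
    have hlt'' : I.wRank w'' f < I.wRank w'' (M₂ w'') := by
      have h3 : joinMap I M₁ M₂ w'' ≠ M₁ w'' := by rw [hw'']; exact hjne
      have h4 := cond_of_join_ne₁ h3
      rw [← hw'']
      exact h4
    have hM2f : M₂ w'' ≠ f := fun e => absurd hlt'' (by rw [e]; exact lt_irrefl _)
    have hfne : I.fRank f w'' ≠ I.fRank f w' := fun e => hne'' (I.fRank_inj f e)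
    rcases hfne.lt_or_gt with h | h
    · exact h₂.2 w'' f ⟨hM2f, hlt'', w', hc2, h⟩
    · exact h₁.2 w f ⟨hM1wf, hlt, w'', hw'', hfr.trans h⟩

lemma join_stable {I : SMInstance n} {M₁ M₂ : Fin n → Fin n}
    (h₁ : IsStable I M₁) (h₂ : IsStable I M₂) :
    IsStable I (joinMap I M₁ M₂) := by
  refine ⟨join_bij h₁ h₂, ?_⟩
  rintro w f ⟨hne, hlt, w', hw', hfr⟩
  rcases mem_pair_join I M₁ M₂ w with hw | hw
  · rw [hw] at hlt
    exact join_aux h₁ h₂ hlt hw' hfr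
  · rw [hw] at hlt
    refine join_aux h₂ h₁ (M₁ := M₂) (M₂ := M₁) hlt ?_ hfr
    rw [← join_comm]; exact hw'

/-- Propagation step along a cycle: if `w` strictly prefers `M₁` and both matchings
are stable, then the `M₂`-partner `w'` of the firm `M₁ w` also strictly prefers `M₁`. -/
lemma prop_step {I : SMInstance n} {M₁ M₂ : Fin n → Fin n}
    (h₁ : IsStable I M₁) (h₂ : IsStable I M₂) {w w' : Fin n}
    (hne : M₁ w ≠ M₂ w) (hp : I.wRank w (M₁ w) < I.wRank w (M₂ w))
    (hw' : M₂ w' = M₁ w) :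
    M₁ w' ≠ M₂ w' ∧ I.wRank w' (M₁ w') < I.wRank w' (M₂ w') := by
  have hwne : w' ≠ w := by rintro rfl; exact hne hw'.symm
  have hM2wf : M₂ w ≠ M₁ w := Ne.symm hne
  have hnb := h₂.2 w (M₁ w)
  unfold Blocking at hnb
  push_neg at hnb
  have hle := hnb hM2wf hp w' hw'
  have hfr : I.fRank (M₁ w) w' < I.fRank (M₁ w) w :=
    lt_of_le_of_ne hle (fun e => hwne (I.fRank_inj (M₁ w) e))
  have hne' : M₁ w' ≠ M₂ w' := by
    rw [hw']
    intro e
    exact hwne (h₁.1.1 e)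
  refine ⟨hne', ?_⟩
  by_contra hcon
  push_neg at hcon
  have hstrict : I.wRank w' (M₂ w') < I.wRank w' (M₁ w') :=
    lt_of_le_of_ne hcon (fun e => hne' (I.wRank_inj w' e.symm))
  have hM1w'f : M₁ w' ≠ M₂ w' := hne'
  apply h₁.2 w' (M₂ w')
  refine ⟨hM1w'f, hstrict, w, ?_, ?_⟩
  · exact hw'.symm
  · rw [hw']
    exact hfr

/-- Transfer of worker `w₁`'s strict preference between two instances in which
all the other workers have identical preferences, given that `M₁, M₂` are stable
in both instances. -/
lemma dir {I J : SMInstance n} {M₁ M₂ : Fin n → Fin n}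
    (h₁I : IsStable I M₁) (h₂I : IsStable I M₂)
    (h₁J : IsStable J M₁) (h₂J : IsStable J M₂) {w₁ : Fin n}
    (hW : ∀ w, w ≠ w₁ → I.wRank w = J.wRank w)
    (hne : M₁ w₁ ≠ M₂ w₁) (hp : I.wRank w₁ (M₁ w₁) < I.wRank w₁ (M₂ w₁)) :
    J.wRank w₁ (M₁ w₁) < J.wRank w₁ (M₂ w₁) := by
  classical
  let E₁ : Fin n ≃ Fin n := Equiv.ofBijective M₁ h₁I.1
  let E₂ : Fin n ≃ Fin n := Equiv.ofBijective M₂ h₂I.1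
  let e : Equiv.Perm (Fin n) := E₁.trans E₂.symm
  have he : ∀ x, M₂ (e x) = M₁ x := by
    intro x
    show (E₂ : Fin n → Fin n) (E₂.symm (E₁ x)) = M₁ x
    rw [Equiv.apply_symm_apply]
    rfl
  have keyI : ∀ t, M₁ (e^[t] w₁) ≠ M₂ (e^[t] w₁) ∧
      I.wRank (e^[t] w₁) (M₁ (e^[t] w₁)) < I.wRank (e^[t] w₁) (M₂ (e^[t] w₁)) := by
    intro t
    induction t with
    | zero => exact ⟨hne, hp⟩
    | succ t ih =>
        rw [Function.iterate_succ_apply']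
        exact prop_step h₁I h₂I ih.1 ih.2 (he _)
  have hK := keyI 1
  rw [Function.iterate_one] at hK
  have hwne : e w₁ ≠ w₁ := by
    intro hq
    apply hne
    rw [← he w₁, hq]
  have hpw : J.wRank (e w₁) (M₁ (e w₁)) < J.wRank (e w₁) (M₂ (e w₁)) := by
    rw [← hW _ hwne]
    exact hK.2
  have keyJ : ∀ t, M₁ (e^[t] (e w₁)) ≠ M₂ (e^[t] (e w₁)) ∧
      J.wRank (e^[t] (e w₁)) (M₁ (e^[t] (e w₁))) <
        J.wRank (e^[t] (e w₁)) (M₂ (e^[t] (e w₁))) := by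
    intro t
    induction t with
    | zero => exact ⟨hK.1, hpw⟩
    | succ t ih =>
        rw [Function.iterate_succ_apply']
        exact prop_step h₁J h₂J ih.1 ih.2 (he _)
  obtain ⟨m, hm⟩ : ∃ m, orderOf e = m + 1 :=
    ⟨orderOf e - 1, (Nat.succ_pred_eq_of_pos (orderOf_pos e)).symm⟩
  have hcyc : e^[m] (e w₁) = w₁ := by
    have h1 : (e ^ orderOf e) w₁ = w₁ := by
      rw [pow_orderOf_eq_one]
      rfl
    rw [hm] at h1
    rw [← Equiv.Perm.iterate_eq_pow e (m + 1)] at h1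
    rw [Function.iterate_succ_apply] at h1
    exact h1
  have hfin := (keyJ m).2
  rw [hcyc] at hfin
  exact hfin

end StmtAux

/-- for k ≥ 2 instances on the same agents in which all workers except
possibly w₁ have identical preferences, the intersection of the sets of stable
matchings is closed under the join and meet of each lattice, and these operations
coincide across the instances on the intersection. -/
theorem stmt16 {n k : ℕ} (hn : 1 ≤ n) (hk : 2 ≤ k) (A : Fin k → SMInstance n)
    (w₁ : Fin n)
    (hW : ∀ i j : Fin k, ∀ w, w ≠ w₁ → (A i).wRank w = (A j).wRank w)
    (M₁ M₂ : Fin n → Fin n)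
    (h₁ : ∀ i, IsStable (A i) M₁) (h₂ : ∀ i, IsStable (A i) M₂) :
    (∀ i j, joinMap (A i) M₁ M₂ = joinMap (A j) M₁ M₂ ∧
            meetMap (A i) M₁ M₂ = meetMap (A j) M₁ M₂) ∧
    (∀ i j, IsStable (A i) (joinMap (A j) M₁ M₂) ∧
            IsStable (A i) (meetMap (A j) M₁ M₂)) := by
  have cond : ∀ i j w, ((A i).wRank w (M₁ w) < (A i).wRank w (M₂ w)) ↔
      ((A j).wRank w (M₁ w) < (A j).wRank w (M₂ w)) := by
    intro i j w
    by_cases hww : w = w₁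
    · subst hww
      by_cases hM : M₁ w = M₂ w
      · rw [hM]
        simp
      · constructor
        · intro h
          exact StmtAux.dir (h₁ i) (h₂ i) (h₁ j) (h₂ j) (fun v hv => hW i j v hv) hM h
        · intro h
          exact StmtAux.dir (h₁ j) (h₂ j) (h₁ i) (h₂ i) (fun v hv => hW j i v hv) hM h
    · rw [hW i j w hww]
  have hjoin : ∀ i j, joinMap (A i) M₁ M₂ = joinMap (A j) M₁ M₂ := by
    intro i j
    funext w
    unfold joinMap
    by_cases h : (A i).wRank w (M₁ w) < (A i).wRank w (M₂ w)
    · rw [if_pos h, if_pos ((cond i j w).mp h)]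
    · rw [if_neg h, if_neg (fun hc => h ((cond j i w).mp hc))]
  have hmeet : ∀ i j, meetMap (A i) M₁ M₂ = meetMap (A j) M₁ M₂ := by
    intro i j
    funext w
    unfold meetMap
    by_cases h : (A i).wRank w (M₁ w) < (A i).wRank w (M₂ w)
    · rw [if_pos h, if_pos ((cond i j w).mp h)]
    · rw [if_neg h, if_neg (fun hc => h ((cond j i w).mp hc))]
  refine ⟨fun i j => ⟨hjoin i j, hmeet i j⟩, fun i j => ?_⟩
  rw [hjoin j i, hmeet j i]
  exact ⟨StmtAux.join_stable (h₁ i) (h₂ i), StmtAux.meet_stable (h₁ i) (h₂ i)⟩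
end
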